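/- arXiv:2505.03657 — 4 statements merged into one kernel-verified Lean document; each statement's English description precedes it below -/
import Mathlib

section
/- Let (T0, T̃0) be a pair of densely defined linear operators with common dense domain D on a complex Hilbert space H satisfying conditions (T1) and (T2), and set T1 := T̃0*, T̃1 := T0*, W := dom T1 = dom T̃1. Then the graph norms ‖u‖ + ‖T1 u‖ and ‖u‖ + ‖T̃1 u‖ are equivalent on W (in particular ‖u‖ + ‖T̃1 u‖ ≤ (1 + 2λ)(‖u‖ + ‖T1 u‖) for all u ∈ W), W equipped with the graph norm ‖u‖ + ‖T1 u‖ is complete, and W0 := dom(closure of T0) is a closed subspace of W (with respect to the graph norm) containing D. -/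
open scoped InnerProductSpace
open Filter Topology LinearPMap

noncomputable section

variable {H : Type*} [NormedAddCommGroup H] [InnerProductSpace ℂ H] [CompleteSpace H]

/-- The inner product used in the paper (antilinear in the **second** entry):
`pInner x y = ⟪y, x⟫` in Mathlib's convention. -/
def pInner {H : Type*} [NormedAddCommGroup H] [InnerProductSpace ℂ H] (x y : H) : ℂ :=
  ⟪y, x⟫_ℂ

/-- A pair of densely defined operators with common domain satisfying conditions (T1) and (T2). -/
structure IsDualPairT12 (T0 T0t : H →ₗ.[ℂ] H) (lam : ℝ) : Prop where
  dom_eq : T0.domain = T0t.domain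
  dense' : Dense (T0.domain : Set H)
  sym : ∀ (φ : T0.domain) (ψ : T0t.domain), pInner (T0 φ) (ψ : H) = pInner (φ : H) (T0t ψ)
  lam_pos : 0 < lam
  bound : ∀ (x : H) (hx : x ∈ T0.domain),
    ‖T0 ⟨x, hx⟩ + T0t ⟨x, dom_eq.le hx⟩‖ ≤ 2 * lam * ‖x‖

/-- A joint pair of abstract Friedrichs operators: (T1), (T2) and (T3). -/
structure IsFriedrichsPair (T0 T0t : H →ₗ.[ℂ] H) (lam mu : ℝ)
    extends IsDualPairT12 T0 T0t lam : Prop where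
  mu_pos : 0 < mu
  coercive : ∀ (x : H) (hx : x ∈ T0.domain),
    2 * mu * ‖x‖ ^ 2 ≤ (pInner (T0 ⟨x, hx⟩ + T0t ⟨x, dom_eq.le hx⟩) x).re

/-- The boundary form `[u|v] := ⟨T₁u , v⟩ − ⟨u , T̃₁v⟩` on the graph space
`W := dom T₁ = dom (T̃₀)*`.  The hypothesis `hW` expresses the fact `dom T₁ = dom T̃₁`. -/
def bform (T0 T0t : H →ₗ.[ℂ] H) (hW : T0t.adjoint.domain = T0.adjoint.domain)
    (u v : T0t.adjoint.domain) : ℂ :=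
  pInner (T0t.adjoint u) (v : H) - pInner (u : H) (T0.adjoint ⟨(v : H), hW.le v.2⟩)

/-- `X^[⊥]`, the `[·|·]`-orthogonal complement of `X ⊆ W` in the graph space. -/
def iorth (T0 T0t : H →ₗ.[ℂ] H) (hW : T0t.adjoint.domain = T0.adjoint.domain)
    (X : Set ↥T0t.adjoint.domain) : Set ↥T0t.adjoint.domain :=
  {u | ∀ v ∈ X, bform T0 T0t hW u v = 0}

/-- `W⁺ = {u ∈ W : [u|u] ≥ 0}`. -/
def Wplus (T0 T0t : H →ₗ.[ℂ] H) (hW : T0t.adjoint.domain = T0.adjoint.domain) :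
    Set ↥T0t.adjoint.domain :=
  {u | 0 ≤ (bform T0 T0t hW u u).re}

/-- `W⁻ = {u ∈ W : [u|u] ≤ 0}`. -/
def Wminus (T0 T0t : H →ₗ.[ℂ] H) (hW : T0t.adjoint.domain = T0.adjoint.domain) :
    Set ↥T0t.adjoint.domain :=
  {u | (bform T0 T0t hW u u).re ≤ 0}

/-- (V)-boundary conditions for a subset `V` of the graph space `W`. -/
def VBC (T0 T0t : H →ₗ.[ℂ] H) (hW : T0t.adjoint.domain = T0.adjoint.domain)
    (V : Set ↥T0t.adjoint.domain) : Prop :=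
  V ⊆ Wplus T0 T0t hW ∧ iorth T0 T0t hW V ⊆ Wminus T0 T0t hW ∧
    V = iorth T0 T0t hW (iorth T0 T0t hW V)

/-- The graph norm `‖u‖_{T₁} = ‖u‖ + ‖T₁ u‖` on the graph space. -/
def gnorm (T0t : H →ₗ.[ℂ] H) (u : T0t.adjoint.domain) : ℝ :=
  ‖(u : H)‖ + ‖T0t.adjoint u‖

/-- The distance associated with the graph norm. -/
def gdist (T0t : H →ₗ.[ℂ] H) (u v : T0t.adjoint.domain) : ℝ := gnorm T0t (u - v)

/-- Closedness (sequential) in the graph-norm topology of `W`. -/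
def GClosed (T0t : H →ₗ.[ℂ] H) (X : Set ↥T0t.adjoint.domain) : Prop :=
  ∀ f : ℕ → ↥T0t.adjoint.domain, (∀ n, f n ∈ X) →
    ∀ l, Tendsto (fun n => gdist T0t (f n) l) atTop (𝓝 0) → l ∈ X

/-- `W₀` (the domain of the closure of `T₀`), viewed as a subset of the graph space `W`. -/
def W0set (T0 T0t : H →ₗ.[ℂ] H) : Set ↥T0t.adjoint.domain :=
  {u | (u : H) ∈ T0.closure.domain}

/-- The graph inner product on `W` (in the paper's convention). -/
def gip (T0t : H →ₗ.[ℂ] H) (u v : ↥T0t.adjoint.domain) : ℂ :=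
  pInner (u : H) (v : H) + pInner (T0t.adjoint u) (T0t.adjoint v)

/-- The (Hilbert) orthogonal complement of `W₀` in the graph space. -/
def W0perp (T0 T0t : H →ₗ.[ℂ] H) : Set ↥T0t.adjoint.domain :=
  {u | ∀ v : ↥T0t.adjoint.domain, (v : H) ∈ T0.closure.domain → gip T0t u v = 0}

/-- `ker T₁` as a subset of the graph space. -/
def kerT1set (T0t : H →ₗ.[ℂ] H) : Set ↥T0t.adjoint.domain := {u | T0t.adjoint u = 0}

/-- `ker T̃₁` as a subset of the graph space. -/
def kerT1tset (T0 T0t : H →ₗ.[ℂ] H) (hW : T0t.adjoint.domain = T0.adjoint.domain) :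
    Set ↥T0t.adjoint.domain :=
  {u | T0.adjoint ⟨(u : H), hW.le u.2⟩ = 0}

/-- An operator `M ∈ L(W;W')`, encoded through the pairing `m u v = ⟨Mu, v⟩_{W',W}`
(linear in `u`, antilinear in `v`, and bounded with respect to the graph norm). -/
structure MOp (T0t : H →ₗ.[ℂ] H) where
  m : ↥T0t.adjoint.domain → ↥T0t.adjoint.domain → ℂ
  add_left : ∀ u v w, m (u + v) w = m u w + m v w
  smul_left : ∀ (c : ℂ) (u w), m (c • u) w = c * m u w
  add_right : ∀ u v w, m u (v + w) = m u v + m u w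
  smul_right : ∀ (c : ℂ) (u w), m u (c • w) = starRingEnd ℂ c * m u w
  bounded : ∃ C, ∀ u v, ‖m u v‖ ≤ C * (gnorm T0t u * gnorm T0t v)

/-- The (M)-boundary conditions for a pairing `m u v = ⟨Mu, v⟩_{W',W}`:
(M1) non-negativity and (M2) `W = ker (D − M) + ker (D + M)`. -/
def MBC (T0 T0t : H →ₗ.[ℂ] H) (hW : T0t.adjoint.domain = T0.adjoint.domain)
    (m : ↥T0t.adjoint.domain → ↥T0t.adjoint.domain → ℂ) : Prop :=
  (∀ u, 0 ≤ (m u u).re) ∧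
  (∀ w : ↥T0t.adjoint.domain, ∃ a b : ↥T0t.adjoint.domain,
    (∀ v, bform T0 T0t hW a v = m a v) ∧ (∀ v, bform T0 T0t hW b v + m b v = 0) ∧ w = a + b)

/-- `ker (D − M)` for a pairing `m`. -/
def kerDsubM (T0 T0t : H →ₗ.[ℂ] H) (hW : T0t.adjoint.domain = T0.adjoint.domain)
    (m : ↥T0t.adjoint.domain → ↥T0t.adjoint.domain → ℂ) : Set ↥T0t.adjoint.domain :=
  {u | ∀ v, bform T0 T0t hW u v = m u v}

/-- `ker (D + M)` for a pairing `m`. -/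
def kerDaddM (T0 T0t : H →ₗ.[ℂ] H) (hW : T0t.adjoint.domain = T0.adjoint.domain)
    (m : ↥T0t.adjoint.domain → ↥T0t.adjoint.domain → ℂ) : Set ↥T0t.adjoint.domain :=
  {u | ∀ v, bform T0 T0t hW u v + m u v = 0}

/-- The adjoint of a densely defined operator is a closed operator. -/
lemma adjoint_graph_closed (T : H →ₗ.[ℂ] H) (hT : Dense (T.domain : Set H)) :
    T.adjoint.IsClosed := by
  have hgraph : (T.adjoint.graph : Set (H × H)) =
      ⋂ φ : T.domain, {p : H × H | ⟪p.2, (φ : H)⟫_ℂ = ⟪p.1, T φ⟫_ℂ} := by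
    ext ⟨x, y⟩
    simp only [SetLike.mem_coe, LinearPMap.mem_graph_iff, Set.mem_iInter, Set.mem_setOf_eq]
    constructor
    · rintro ⟨u, hu, hv⟩ φ
      subst hu; subst hv
      exact LinearPMap.adjoint_isFormalAdjoint hT u φ
    · intro h
      have hx : x ∈ T.adjoint.domain := LinearPMap.mem_adjoint_domain_of_exists x ⟨y, h⟩
      exact ⟨⟨x, hx⟩, rfl, LinearPMap.adjoint_apply_eq hT ⟨x, hx⟩ h⟩
  show _root_.IsClosed (T.adjoint.graph : Set (H × H))
  rw [hgraph]
  exact isClosed_iInter fun φ =>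
    isClosed_eq (Continuous.inner continuous_snd continuous_const)
      (Continuous.inner continuous_fst continuous_const)

/-- For `u ∈ W`, `‖T₁ u + T̃₁ u‖ ≤ 2λ‖u‖`. -/
lemma sum_adjoint_bound (T0 T0t : H →ₗ.[ℂ] H) (lam : ℝ) (hP : IsDualPairT12 T0 T0t lam)
    (hW : T0t.adjoint.domain = T0.adjoint.domain) (u : T0t.adjoint.domain) :
    ‖T0t.adjoint u + T0.adjoint ⟨(u : H), hW.le u.2⟩‖ ≤ 2 * lam * ‖(u : H)‖ := by
  have hD : Dense (T0.domain : Set H) := hP.dense'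
  have hDt : Dense (T0t.domain : Set H) := hP.dom_eq ▸ hP.dense'
  have hlam := hP.lam_pos
  set y := T0t.adjoint u + T0.adjoint ⟨(u : H), hW.le u.2⟩ with hy
  have hinner : ∀ φ : T0.domain, ⟪y, (φ : H)⟫_ℂ =
      ⟪(u : H), T0 φ + T0t ⟨(φ : H), hP.dom_eq.le φ.2⟩⟫_ℂ := by
    intro φ
    have h1 : ⟪T0t.adjoint u, (φ : H)⟫_ℂ = ⟪(u : H), T0t ⟨(φ : H), hP.dom_eq.le φ.2⟩⟫_ℂ :=
      LinearPMap.adjoint_isFormalAdjoint hDt u ⟨(φ : H), hP.dom_eq.le φ.2⟩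
    have h2 : ⟪T0.adjoint ⟨(u : H), hW.le u.2⟩, (φ : H)⟫_ℂ = ⟪(u : H), T0 φ⟫_ℂ :=
      LinearPMap.adjoint_isFormalAdjoint hD ⟨(u : H), hW.le u.2⟩ φ
    rw [hy, inner_add_left, h1, h2, inner_add_right]
    ring
  have hnorm : ∀ φ : T0.domain, ‖⟪y, (φ : H)⟫_ℂ‖ ≤ (2 * lam * ‖(u : H)‖) * ‖(φ : H)‖ := by
    intro φ
    rw [hinner φ]
    calc ‖⟪(u : H), T0 φ + T0t ⟨(φ : H), hP.dom_eq.le φ.2⟩⟫_ℂ‖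
        ≤ ‖(u : H)‖ * ‖T0 φ + T0t ⟨(φ : H), hP.dom_eq.le φ.2⟩‖ := norm_inner_le_norm _ _
      _ ≤ ‖(u : H)‖ * (2 * lam * ‖(φ : H)‖) :=
          mul_le_mul_of_nonneg_left (hP.bound (φ : H) φ.2) (norm_nonneg _)
      _ = (2 * lam * ‖(u : H)‖) * ‖(φ : H)‖ := by ring
  obtain ⟨g, hgmem, hglim⟩ := mem_closure_iff_seq_limit.mp (hD y)
  have hlim1 : Tendsto (fun n => ‖⟪y, g n⟫_ℂ‖) atTop (𝓝 (‖y‖ ^ 2)) := by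
    have h1 : Tendsto (fun n => ⟪y, g n⟫_ℂ) atTop (𝓝 ⟪y, y⟫_ℂ) :=
      tendsto_const_nhds.inner hglim
    have h2 := h1.norm
    have h3 : ‖⟪y, y⟫_ℂ‖ = ‖y‖ ^ 2 := by
      rw [inner_self_eq_norm_sq_to_K]
      simp [norm_pow]
    rwa [h3] at h2
  have hlim2 : Tendsto (fun n => (2 * lam * ‖(u : H)‖) * ‖g n‖) atTop
      (𝓝 ((2 * lam * ‖(u : H)‖) * ‖y‖)) := Tendsto.const_mul (2 * lam * ‖(u : H)‖) hglim.norm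
  have hsq : ‖y‖ ^ 2 ≤ (2 * lam * ‖(u : H)‖) * ‖y‖ :=
    le_of_tendsto_of_tendsto' hlim1 hlim2 (fun n => hnorm ⟨g n, hgmem n⟩)
  rcases (norm_nonneg y).eq_or_lt with h0 | h0
  · rw [← h0]; positivity
  · nlinarith [hsq, h0]

/-- Theorem 2.3 (iv): the graph norms of `T₁` and `T̃₁` are equivalent on `W`
(with explicit constant `1 + 2λ` in one direction), `W` is complete for the
graph norm, and `W₀` is a graph-norm closed subspace of `W` containing `D`. -/
theorem graph_norms_equivalent_and_complete
    (T0 T0t : H →ₗ.[ℂ] H) (lam : ℝ) (hP : IsDualPairT12 T0 T0t lam)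
    (hW : T0t.adjoint.domain = T0.adjoint.domain) :
    (∀ u : T0t.adjoint.domain,
      ‖(u : H)‖ + ‖T0.adjoint ⟨(u : H), hW.le u.2⟩‖ ≤
        (1 + 2 * lam) * (‖(u : H)‖ + ‖T0t.adjoint u‖)) ∧
    (∃ C > (0 : ℝ), ∀ u : T0t.adjoint.domain,
      ‖(u : H)‖ + ‖T0t.adjoint u‖ ≤
        C * (‖(u : H)‖ + ‖T0.adjoint ⟨(u : H), hW.le u.2⟩‖)) ∧
    (∀ f : ℕ → ↥T0t.adjoint.domain,
      (∀ ε > (0 : ℝ), ∃ N, ∀ m ≥ N, ∀ n ≥ N, gdist T0t (f m) (f n) < ε) →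
      ∃ l, Tendsto (fun n => gdist T0t (f n) l) atTop (𝓝 0)) ∧
    GClosed T0t (W0set T0 T0t) ∧
    (∀ x ∈ T0.domain, x ∈ T0t.adjoint.domain) ∧
    (∀ x ∈ T0.domain, x ∈ T0.closure.domain) := by
  have hD : Dense (T0.domain : Set H) := hP.dense'
  have hDt : Dense (T0t.domain : Set H) := hP.dom_eq ▸ hP.dense'
  have hlam := hP.lam_pos
  have key := sum_adjoint_bound T0 T0t lam hP hW
  have hfa : T0t.IsFormalAdjoint T0 := fun ψ φ => (hP.sym φ ψ).symm
  have hle : T0 ≤ T0t.adjoint := LinearPMap.IsFormalAdjoint.le_adjoint hDt hfa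
  have hclosedAdj : T0t.adjoint.IsClosed := adjoint_graph_closed T0t hDt
  have hclosable : T0.IsClosable := hclosedAdj.isClosable.leIsClosable hle
  have hclle : T0.closure ≤ T0t.adjoint := by
    refine LinearPMap.le_of_le_graph ?_
    rw [← hclosable.graph_closure_eq_closure_graph]
    have h2 : _root_.IsClosed (T0t.adjoint.graph : Set (H × H)) := hclosedAdj
    exact Submodule.topologicalClosure_minimal _ (LinearPMap.le_graph_of_le hle) h2
  have gdist_eq : ∀ u v : T0t.adjoint.domain,
      gdist T0t u v = ‖(u : H) - (v : H)‖ + ‖T0t.adjoint u - T0t.adjoint v‖ := by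
    intro u v
    show ‖((u - v : T0t.adjoint.domain) : H)‖ + ‖T0t.adjoint (u - v)‖ = _
    rw [Submodule.coe_sub, LinearPMap.map_sub]
  refine ⟨?_, ⟨1 + 2 * lam, by linarith, ?_⟩, ?_, ?_, fun x hx => hle.1 hx,
    fun x hx => T0.le_closure.1 hx⟩
  · intro u
    have h1 : ‖T0.adjoint ⟨(u : H), hW.le u.2⟩‖ ≤ 2 * lam * ‖(u : H)‖ + ‖T0t.adjoint u‖ := by
      calc ‖T0.adjoint ⟨(u : H), hW.le u.2⟩‖
          = ‖(T0t.adjoint u + T0.adjoint ⟨(u : H), hW.le u.2⟩) - T0t.adjoint u‖ := by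
            rw [add_sub_cancel_left]
        _ ≤ ‖T0t.adjoint u + T0.adjoint ⟨(u : H), hW.le u.2⟩‖ + ‖T0t.adjoint u‖ :=
            norm_sub_le _ _
        _ ≤ 2 * lam * ‖(u : H)‖ + ‖T0t.adjoint u‖ := add_le_add_left (key u) _
    nlinarith [norm_nonneg (u : H), norm_nonneg (T0t.adjoint u)]
  · intro u
    have h1 : ‖T0t.adjoint u‖ ≤ 2 * lam * ‖(u : H)‖ + ‖T0.adjoint ⟨(u : H), hW.le u.2⟩‖ := by
      calc ‖T0t.adjoint u‖
          = ‖(T0t.adjoint u + T0.adjoint ⟨(u : H), hW.le u.2⟩) -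
              T0.adjoint ⟨(u : H), hW.le u.2⟩‖ := by rw [add_sub_cancel_right]
        _ ≤ ‖T0t.adjoint u + T0.adjoint ⟨(u : H), hW.le u.2⟩‖ +
              ‖T0.adjoint ⟨(u : H), hW.le u.2⟩‖ := norm_sub_le _ _
        _ ≤ 2 * lam * ‖(u : H)‖ + ‖T0.adjoint ⟨(u : H), hW.le u.2⟩‖ :=
            add_le_add_left (key u) _
    nlinarith [norm_nonneg (u : H), norm_nonneg (T0.adjoint ⟨(u : H), hW.le u.2⟩)]
  · intro f hf
    have hC1 : CauchySeq (fun n => ((f n : H))) := by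
      rw [Metric.cauchySeq_iff]
      intro ε hε
      obtain ⟨N, hN⟩ := hf ε hε
      refine ⟨N, fun m hm n hn => lt_of_le_of_lt ?_ (hN m hm n hn)⟩
      rw [dist_eq_norm, gdist_eq]
      exact le_add_of_nonneg_right (norm_nonneg _)
    have hC2 : CauchySeq (fun n => T0t.adjoint (f n)) := by
      rw [Metric.cauchySeq_iff]
      intro ε hε
      obtain ⟨N, hN⟩ := hf ε hε
      refine ⟨N, fun m hm n hn => lt_of_le_of_lt ?_ (hN m hm n hn)⟩
      rw [dist_eq_norm, gdist_eq]
      exact le_add_of_nonneg_left (norm_nonneg _)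
    obtain ⟨x, hx⟩ := cauchySeq_tendsto_of_complete hC1
    obtain ⟨yl, hyl⟩ := cauchySeq_tendsto_of_complete hC2
    have hlimeq : ∀ φ : T0t.domain, ⟪yl, (φ : H)⟫_ℂ = ⟪x, T0t φ⟫_ℂ := by
      intro φ
      have h1 : Tendsto (fun n => ⟪T0t.adjoint (f n), (φ : H)⟫_ℂ) atTop
          (𝓝 ⟪yl, (φ : H)⟫_ℂ) := hyl.inner tendsto_const_nhds
      have h2 : Tendsto (fun n => ⟪((f n) : H), T0t φ⟫_ℂ) atTop (𝓝 ⟪x, T0t φ⟫_ℂ) :=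
        hx.inner tendsto_const_nhds
      have heq : ∀ n, ⟪T0t.adjoint (f n), (φ : H)⟫_ℂ = ⟪((f n) : H), T0t φ⟫_ℂ := fun n =>
        LinearPMap.adjoint_isFormalAdjoint hDt (f n) φ
      exact tendsto_nhds_unique (h1.congr heq) h2
    have hmem : x ∈ T0t.adjoint.domain :=
      LinearPMap.mem_adjoint_domain_of_exists x ⟨yl, hlimeq⟩
    have hval : T0t.adjoint ⟨x, hmem⟩ = yl :=
      LinearPMap.adjoint_apply_eq hDt ⟨x, hmem⟩ hlimeq
    refine ⟨⟨x, hmem⟩, ?_⟩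
    have t1 : Tendsto (fun n => ‖((f n) : H) - x‖) atTop (𝓝 0) :=
      tendsto_iff_norm_sub_tendsto_zero.mp hx
    have t2 : Tendsto (fun n => ‖T0t.adjoint (f n) - yl‖) atTop (𝓝 0) :=
      tendsto_iff_norm_sub_tendsto_zero.mp hyl
    have t3 : Tendsto (fun n => ‖((f n) : H) - x‖ + ‖T0t.adjoint (f n) - yl‖) atTop
        (𝓝 (0 + 0)) := t1.add t2
    rw [add_zero] at t3
    refine t3.congr fun n => ?_
    rw [gdist_eq, hval]
  · intro f hfW0 l hl
    have hx : Tendsto (fun n => ((f n) : H)) atTop (𝓝 (l : H)) := by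
      refine tendsto_iff_norm_sub_tendsto_zero.mpr ?_
      refine squeeze_zero (fun n => norm_nonneg _) (fun n => ?_) hl
      rw [gdist_eq]
      exact le_add_of_nonneg_right (norm_nonneg _)
    have hy : Tendsto (fun n => T0t.adjoint (f n)) atTop (𝓝 (T0t.adjoint l)) := by
      refine tendsto_iff_norm_sub_tendsto_zero.mpr ?_
      refine squeeze_zero (fun n => norm_nonneg _) (fun n => ?_) hl
      rw [gdist_eq]
      exact le_add_of_nonneg_left (norm_nonneg _)
    have hmemn : ∀ n, (((f n) : H), T0t.adjoint (f n)) ∈ T0.closure.graph := by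
      intro n
      have hd : ((f n) : H) ∈ T0.closure.domain := hfW0 n
      have hv : T0.closure ⟨((f n) : H), hd⟩ = T0t.adjoint (f n) := hclle.2 rfl
      rw [← hv]
      exact T0.closure.mem_graph ⟨((f n) : H), hd⟩
    have hgcl : _root_.IsClosed (T0.closure.graph : Set (H × H)) :=
      hclosable.closure_isClosed
    have hlim : Tendsto (fun n => (((f n) : H), T0t.adjoint (f n))) atTop
        (𝓝 ((l : H), T0t.adjoint l)) := hx.prodMk_nhds hy
    have hmem : ((l : H), T0t.adjoint l) ∈ T0.closure.graph :=
      hgcl.mem_of_tendsto hlim (Filter.Eventually.of_forall hmemn)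
    rw [LinearPMap.mem_graph_iff] at hmem
    obtain ⟨v, hv1, hv2⟩ := hmem
    have hv1' : (v : H) = (l : H) := hv1
    show (l : H) ∈ T0.closure.domain
    rw [← hv1']
    exact v.2
end
end

section
/- Let (T0, T̃0) be a pair of densely defined linear operators with common dense domain D on a complex Hilbert space H satisfying conditions (T1) and (T2). For every subset X ⊆ W, the set X^[⊥] is a closed subspace of W with respect to the graph norm. Moreover, for a subspace X of W, one has X^[⊥][⊥] = X if and only if X is closed in W (with respect to the graph norm) and W0 ⊆ X. -/
open scoped InnerProductSpace
open Filter Topology LinearPMap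

noncomputable section

variable {H : Type*} [NormedAddCommGroup H] [InnerProductSpace ℂ H] [CompleteSpace H]

namespace FriedrichsAux
set_option linter.unusedSectionVars false

open LinearPMap

variable {H : Type*} [NormedAddCommGroup H] [InnerProductSpace ℂ H] [CompleteSpace H]

local notation "⟪" x ", " y "⟫" => @inner ℂ _ _ x y

variable {T0 T0t : H →ₗ.[ℂ] H} {lam : ℝ}

section Basic

theorem dense0 (hP : IsDualPairT12 T0 T0t lam) : Dense (T0.domain : Set H) := hP.dense'

theorem dense0t (hP : IsDualPairT12 T0 T0t lam) : Dense (T0t.domain : Set H) := by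
  rw [← hP.dom_eq]; exact hP.dense'

theorem fa (hP : IsDualPairT12 T0 T0t lam) : T0.IsFormalAdjoint T0t := by
  intro φ ψ
  have h := hP.sym φ ψ
  simp only [pInner] at h
  rw [← inner_conj_symm, h, inner_conj_symm]

theorem le_T1 (hP : IsDualPairT12 T0 T0t lam) : T0 ≤ T0t.adjoint :=
  ((fa hP).symm).le_adjoint (dense0t hP)

theorem le_Tt1 (hP : IsDualPairT12 T0 T0t lam) : T0t ≤ T0.adjoint :=
  (fa hP).le_adjoint (dense0 hP)

theorem faT1 (hP : IsDualPairT12 T0 T0t lam) : (T0t.adjoint).IsFormalAdjoint T0t :=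
  adjoint_isFormalAdjoint (dense0t hP)

theorem faTt1 (hP : IsDualPairT12 T0 T0t lam) : (T0.adjoint).IsFormalAdjoint T0 :=
  adjoint_isFormalAdjoint (dense0 hP)

/-- The bounded operator `T0 + T0t` on the common domain. -/
noncomputable def Sop (hP : IsDualPairT12 T0 T0t lam) : ↥T0.domain →L[ℂ] H :=
  LinearMap.mkContinuous
    (T0.toFun + T0t.toFun ∘ₗ Submodule.inclusion hP.dom_eq.le) (2 * lam)
    (fun x => hP.bound x.1 x.2)

/-- The bounded self-adjoint extension of `T0 + T0t`. -/
noncomputable def Bop (hP : IsDualPairT12 T0 T0t lam) : H →L[ℂ] H :=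
  (Sop hP).extend (Submodule.subtypeL T0.domain)

theorem Bop_apply (hP : IsDualPairT12 T0 T0t lam) (φ : T0.domain) :
    Bop hP (φ : H) = T0 φ + T0t (Submodule.inclusion hP.dom_eq.le φ) :=
  ContinuousLinearMap.extend_eq _ (dense0 hP).denseRange_val
    isUniformEmbedding_subtype_val.isUniformInducing _

theorem Bop_symm (hP : IsDualPairT12 T0 T0t lam) (x y : H) :
    ⟪Bop hP x, y⟫ = ⟪x, Bop hP y⟫ := by
  have step1 : ∀ (x : H) (ψ : T0.domain), ⟪Bop hP x, (ψ : H)⟫ = ⟪x, Bop hP (ψ : H)⟫ := by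
    intro x ψ
    have c1 : Continuous fun x : H => ⟪Bop hP x, (ψ : H)⟫ :=
      ((Bop hP).continuous).inner continuous_const
    have c2 : Continuous fun x : H => ⟪x, Bop hP (ψ : H)⟫ :=
      continuous_id.inner continuous_const
    have heq : Set.EqOn (fun x : H => ⟪Bop hP x, (ψ : H)⟫)
        (fun x : H => ⟪x, Bop hP (ψ : H)⟫) (T0.domain : Set H) := by
      intro x hx
      have key : ∀ φ χ : T0.domain, ⟪Bop hP (φ : H), (χ : H)⟫ = ⟪(φ : H), Bop hP (χ : H)⟫ := by
        intro φ χ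
        rw [Bop_apply hP φ, Bop_apply hP χ, inner_add_left, inner_add_right]
        have h1 : ⟪T0 φ, (χ : H)⟫ = ⟪(φ : H), T0t (Submodule.inclusion hP.dom_eq.le χ)⟫ := by
          have := fa hP φ (Submodule.inclusion hP.dom_eq.le χ)
          rwa [Submodule.coe_inclusion] at this
        have h2 : ⟪T0t (Submodule.inclusion hP.dom_eq.le φ), (χ : H)⟫ = ⟪(φ : H), T0 χ⟫ := by
          have := fa hP χ (Submodule.inclusion hP.dom_eq.le φ)
          rw [Submodule.coe_inclusion] at this
          rw [← inner_conj_symm, ← this, inner_conj_symm]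
        rw [h1, h2]; ring
      exact key ⟨x, hx⟩ ψ
    exact congrFun (Continuous.ext_on (dense0 hP) c1 c2 heq) x
  have c1 : Continuous fun y : H => ⟪Bop hP x, y⟫ := continuous_const.inner continuous_id
  have c2 : Continuous fun y : H => ⟪x, Bop hP y⟫ := continuous_const.inner (Bop hP).continuous
  have heq : Set.EqOn (fun y : H => ⟪Bop hP x, y⟫) (fun y : H => ⟪x, Bop hP y⟫)
      (T0.domain : Set H) := by
    rintro y hy
    exact step1 x ⟨y, hy⟩
  exact congrFun (Continuous.ext_on (dense0 hP) c1 c2 heq) y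

end Basic
section Graph

variable (hW : T0t.adjoint.domain = T0.adjoint.domain)

theorem Tt1_eq (hP : IsDualPairT12 T0 T0t lam) (u : T0t.adjoint.domain) :
    T0.adjoint ⟨(u : H), hW.le u.2⟩ = Bop hP (u : H) - T0t.adjoint u := by
  refine adjoint_apply_eq (dense0 hP) _ (fun φ => ?_)
  have h1 : ⟪T0t.adjoint u, (φ : H)⟫ = ⟪(u : H), T0t (Submodule.inclusion hP.dom_eq.le φ)⟫ := by
    have := faT1 hP u (Submodule.inclusion hP.dom_eq.le φ)
    rwa [Submodule.coe_inclusion] at this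
  rw [inner_sub_left, Bop_symm hP, h1, Bop_apply hP φ, inner_add_right]
  ring

/-- The embedding `u ↦ (T₁u, u)` of the graph space into `H ⊕ H` (L²). -/
noncomputable def Jlin (T0t : H →ₗ.[ℂ] H) :
    ↥T0t.adjoint.domain →ₗ[ℂ] WithLp 2 (H × H) :=
  (WithLp.linearEquiv 2 ℂ (H × H)).symm.toLinearMap ∘ₗ
    (T0t.adjoint.toFun.prod T0t.adjoint.domain.subtype)

/-- The map `v ↦ (v, -T̃₁v)`. -/
noncomputable def Klin (T0 T0t : H →ₗ.[ℂ] H)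
    (hW : T0t.adjoint.domain = T0.adjoint.domain) :
    ↥T0t.adjoint.domain →ₗ[ℂ] WithLp 2 (H × H) :=
  (WithLp.linearEquiv 2 ℂ (H × H)).symm.toLinearMap ∘ₗ
    (T0t.adjoint.domain.subtype.prod (-(T0.adjoint.toFun ∘ₗ Submodule.inclusion hW.le)))

theorem Jlin_fst (u : T0t.adjoint.domain) : (Jlin T0t u).fst = T0t.adjoint u := rfl

theorem Jlin_snd (u : T0t.adjoint.domain) : (Jlin T0t u).snd = (u : H) := rfl

theorem Klin_fst (v : T0t.adjoint.domain) : (Klin T0 T0t hW v).fst = (v : H) := rfl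

theorem Klin_snd (v : T0t.adjoint.domain) :
    (Klin T0 T0t hW v).snd = -(T0.adjoint ⟨(v : H), hW.le v.2⟩) := rfl

theorem bform_eq (u v : T0t.adjoint.domain) :
    bform T0 T0t hW u v = ⟪Klin T0 T0t hW v, Jlin T0t u⟫ := by
  rw [WithLp.prod_inner_apply, WithLp.ofLp_fst, WithLp.ofLp_fst, WithLp.ofLp_snd, WithLp.ofLp_snd, Jlin_fst, Jlin_snd, Klin_fst, Klin_snd, inner_neg_left]
  simp only [bform, pInner]
  ring

theorem bform_herm (hP : IsDualPairT12 T0 T0t lam) (u v : T0t.adjoint.domain) :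
    bform T0 T0t hW u v = starRingEnd ℂ (bform T0 T0t hW v u) := by
  simp only [bform, pInner, Tt1_eq hW hP, inner_sub_left, inner_sub_right, _root_.map_sub,
    inner_conj_symm]
  rw [Bop_symm hP]
  ring

theorem gdist_eq (u v : T0t.adjoint.domain) :
    gdist T0t u v = ‖(u : H) - (v : H)‖ + ‖T0t.adjoint u - T0t.adjoint v‖ := by
  simp only [gdist, gnorm, Submodule.coe_sub, LinearPMap.map_sub]

theorem tendsto_Jlin_of_gdist {f : ℕ → T0t.adjoint.domain} {l : T0t.adjoint.domain}
    (h : Tendsto (fun n => gdist T0t (f n) l) atTop (𝓝 0)) :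
    Tendsto (fun n => Jlin T0t (f n)) atTop (𝓝 (Jlin T0t l)) := by
  have h1 : Tendsto (fun n => ‖((f n : H)) - (l : H)‖) atTop (𝓝 0) := by
    refine squeeze_zero (fun n => norm_nonneg _) (fun n => ?_) h
    rw [gdist_eq]; exact le_add_of_nonneg_right (norm_nonneg _)
  have h2 : Tendsto (fun n => ‖T0t.adjoint (f n) - T0t.adjoint l‖) atTop (𝓝 0) := by
    refine squeeze_zero (fun n => norm_nonneg _) (fun n => ?_) h
    rw [gdist_eq]; exact le_add_of_nonneg_left (norm_nonneg _)
  have hc1 : Tendsto (fun n => T0t.adjoint (f n)) atTop (𝓝 (T0t.adjoint l)) :=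
    tendsto_iff_norm_sub_tendsto_zero.2 h2
  have hc2 : Tendsto (fun n => ((f n : H))) atTop (𝓝 (l : H)) :=
    tendsto_iff_norm_sub_tendsto_zero.2 h1
  have : Tendsto (fun n => ((T0t.adjoint (f n), ((f n : H))) : H × H)) atTop
      (𝓝 (T0t.adjoint l, (l : H))) := hc1.prodMk_nhds hc2
  exact ((WithLp.prodContinuousLinearEquiv 2 ℂ H H).symm.continuous.tendsto _).comp this

theorem exists_of_tendsto_Jlin (hP : IsDualPairT12 T0 T0t lam)
    {x : ℕ → T0t.adjoint.domain} {e : WithLp 2 (H × H)}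
    (hx : Tendsto (fun n => Jlin T0t (x n)) atTop (𝓝 e)) :
    ∃ l : T0t.adjoint.domain, Jlin T0t l = e ∧
      Tendsto (fun n => gdist T0t (x n) l) atTop (𝓝 0) := by
  have hx' : Tendsto (fun n => ((T0t.adjoint (x n), ((x n : H))) : H × H)) atTop
      (𝓝 ((WithLp.prodContinuousLinearEquiv 2 ℂ H H) e)) := by
    have := ((WithLp.prodContinuousLinearEquiv 2 ℂ H H).continuous.tendsto _).comp hx
    exact this
  set a := ((WithLp.prodContinuousLinearEquiv 2 ℂ H H) e).1 with ha
  set b := ((WithLp.prodContinuousLinearEquiv 2 ℂ H H) e).2 with hb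
  have h1 : Tendsto (fun n => T0t.adjoint (x n)) atTop (𝓝 a) :=
    (continuous_fst.tendsto _).comp hx'
  have h2 : Tendsto (fun n => ((x n : H))) atTop (𝓝 b) :=
    (continuous_snd.tendsto _).comp hx'
  have key : ∀ ψ : T0t.domain, ⟪a, (ψ : H)⟫ = ⟪b, T0t ψ⟫ := by
    intro ψ
    have k1 : Tendsto (fun n => ⟪T0t.adjoint (x n), (ψ : H)⟫) atTop (𝓝 ⟪a, (ψ : H)⟫) :=
      (Continuous.inner continuous_id continuous_const).continuousAt.tendsto.comp h1
    have k2 : Tendsto (fun n => ⟪((x n : H)), T0t ψ⟫) atTop (𝓝 ⟪b, T0t ψ⟫) :=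
      (Continuous.inner continuous_id continuous_const).continuousAt.tendsto.comp h2
    have : (fun n => ⟪T0t.adjoint (x n), (ψ : H)⟫) = fun n => ⟪((x n : H)), T0t ψ⟫ :=
      funext fun n => faT1 hP (x n) ψ
    rw [this] at k1
    exact tendsto_nhds_unique k1 k2
  have hbmem : b ∈ T0t.adjoint.domain :=
    mem_adjoint_domain_of_exists b ⟨a, fun ψ => key ψ⟩
  have hval : T0t.adjoint ⟨b, hbmem⟩ = a :=
    adjoint_apply_eq (dense0t hP) ⟨b, hbmem⟩ (fun ψ => key ψ)
  refine ⟨⟨b, hbmem⟩, ?_, ?_⟩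
  · apply (WithLp.prodContinuousLinearEquiv 2 ℂ H H).injective
    show ((T0t.adjoint ⟨b, hbmem⟩ : H), (b : H)) = _
    rw [hval]
  · have g1 : Tendsto (fun n => ‖((x n : H)) - b‖) atTop (𝓝 0) :=
      tendsto_iff_norm_sub_tendsto_zero.1 h2
    have g2 : Tendsto (fun n => ‖T0t.adjoint (x n) - a‖) atTop (𝓝 0) := by
      have := tendsto_iff_norm_sub_tendsto_zero.1 h1
      exact this
    have := g1.add g2
    rw [add_zero] at this
    refine this.congr (fun n => ?_)
    rw [gdist_eq, hval]

end Graph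
section MainLemmas

variable (hW : T0t.adjoint.domain = T0.adjoint.domain)

theorem adjoint_graph_char (hP : IsDualPairT12 T0 T0t lam) :
    (T0t.adjoint.graph : Set (H × H)) =
      ⋂ ψ : T0t.domain, {p : H × H | ⟪p.2, (ψ : H)⟫ = ⟪p.1, T0t ψ⟫} := by
  ext p
  simp only [Set.mem_iInter, Set.mem_setOf_eq, SetLike.mem_coe]
  constructor
  · intro hp ψ
    obtain ⟨y, hy⟩ := T0t.adjoint.mem_graph_iff'.1 hp
    rw [← hy]
    exact faT1 hP y ψ
  · intro hp
    have hmem : p.1 ∈ T0t.adjoint.domain :=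
      mem_adjoint_domain_of_exists p.1 ⟨p.2, fun ψ => hp ψ⟩
    have hval : T0t.adjoint ⟨p.1, hmem⟩ = p.2 :=
      adjoint_apply_eq (dense0t hP) ⟨p.1, hmem⟩ (fun ψ => hp ψ)
    exact T0t.adjoint.mem_graph_iff'.2 ⟨⟨p.1, hmem⟩, by rw [hval]⟩

theorem T1_isClosed (hP : IsDualPairT12 T0 T0t lam) : (T0t.adjoint).IsClosed := by
  show IsClosed (T0t.adjoint.graph : Set (H × H))
  rw [adjoint_graph_char hP]
  exact isClosed_iInter fun ψ =>
    isClosed_eq (continuous_snd.inner continuous_const) (continuous_fst.inner continuous_const)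

theorem T0_isClosable (hP : IsDualPairT12 T0 T0t lam) : T0.IsClosable :=
  (T1_isClosed hP).isClosable.leIsClosable (le_T1 hP)

theorem closure_le_T1 (hP : IsDualPairT12 T0 T0t lam) : T0.closure ≤ T0t.adjoint := by
  refine le_of_le_graph ?_
  rw [← (T0_isClosable hP).graph_closure_eq_closure_graph]
  have h1 : T0.graph ≤ T0t.adjoint.graph := le_graph_of_le (le_T1 hP)
  have h2 : IsClosed (T0t.adjoint.graph : Set (H × H)) := T1_isClosed hP
  intro x hx
  rw [← SetLike.mem_coe, Submodule.topologicalClosure_coe] at hx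
  exact h2.closure_subset_iff.mpr h1 hx

theorem bform_eq_zero_of_W0 (hP : IsDualPairT12 T0 T0t lam) (u : T0t.adjoint.domain)
    (hu : (u : H) ∈ T0.closure.domain) (v : T0t.adjoint.domain) :
    bform T0 T0t hW u v = 0 := by
  have hT1u : T0t.adjoint u = T0.closure ⟨(u : H), hu⟩ := ((closure_le_T1 hP).2 rfl).symm
  have hmem : ((u : H), T0.closure ⟨(u : H), hu⟩) ∈ closure (T0.graph : Set (H × H)) := by
    have h1 : ((u : H), T0.closure ⟨(u : H), hu⟩) ∈ T0.closure.graph :=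
      T0.closure.mem_graph ⟨(u : H), hu⟩
    rw [← (T0_isClosable hP).graph_closure_eq_closure_graph] at h1
    rwa [← Submodule.topologicalClosure_coe]
  obtain ⟨φ, hφmem, hφlim⟩ := mem_closure_iff_seq_limit.1 hmem
  set c : H × H → ℂ :=
    fun p => ⟪(v : H), p.2⟫ - ⟪T0.adjoint ⟨(v : H), hW.le v.2⟩, p.1⟫ with hc
  have hc_cont : Continuous c := by
    apply Continuous.sub
    · exact Continuous.inner continuous_const continuous_snd
    · exact Continuous.inner continuous_const continuous_fst
  have hzero : ∀ n, c (φ n) = 0 := by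
    intro n
    obtain ⟨x, hx⟩ := T0.mem_graph_iff'.1 (hφmem n)
    have hfa : ⟪T0.adjoint ⟨(v : H), hW.le v.2⟩, (x : H)⟫
        = ⟪(v : H), T0 x⟫ := faTt1 hP ⟨(v : H), hW.le v.2⟩ x
    have hcx : c ((x : H), T0 x) = 0 := by
      simp only [hc]
      rw [hfa]
      ring
    rwa [hx] at hcx
  have hlim : Tendsto (fun n => c (φ n)) atTop
      (𝓝 (c ((u : H), T0.closure ⟨(u : H), hu⟩))) := (hc_cont.tendsto _).comp hφlim
  have hfin : c ((u : H), T0.closure ⟨(u : H), hu⟩) = 0 := by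
    refine tendsto_nhds_unique hlim ?_
    simp [hzero]
  simp only [bform, pInner, hT1u]
  simpa [hc] using hfin

theorem W0_subset_iorth (hP : IsDualPairT12 T0 T0t lam) (Y : Set ↥T0t.adjoint.domain) :
    W0set T0 T0t ⊆ iorth T0 T0t hW Y :=
  fun u hu v _ => bform_eq_zero_of_W0 hW hP u hu v

theorem iorth_gclosed (X : Set ↥T0t.adjoint.domain) :
    GClosed T0t (iorth T0 T0t hW X) := by
  intro f hf l hl v hv
  have hJ := tendsto_Jlin_of_gdist (T0t := T0t) hl
  have hten : Tendsto (fun n => ⟪Klin T0 T0t hW v, Jlin T0t (f n)⟫) atTop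
      (𝓝 ⟪Klin T0 T0t hW v, Jlin T0t l⟫) :=
    ((continuous_const.inner continuous_id).tendsto _).comp hJ
  have hz : (fun n => ⟪Klin T0 T0t hW v, Jlin T0t (f n)⟫) = fun _ => (0 : ℂ) := by
    funext n
    rw [← bform_eq]
    exact hf n v hv
  rw [hz] at hten
  rw [bform_eq]
  exact tendsto_nhds_unique hten tendsto_const_nhds

theorem iorth_zero_mem (X : Set ↥T0t.adjoint.domain) :
    (0 : ↥T0t.adjoint.domain) ∈ iorth T0 T0t hW X := by
  intro v hv
  rw [bform_eq, _root_.map_zero, inner_zero_right]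

theorem iorth_add_mem (X : Set ↥T0t.adjoint.domain) (u v : ↥T0t.adjoint.domain)
    (hu : u ∈ iorth T0 T0t hW X) (hv : v ∈ iorth T0 T0t hW X) :
    u + v ∈ iorth T0 T0t hW X := by
  intro w hw
  rw [bform_eq, _root_.map_add, inner_add_right, ← bform_eq, ← bform_eq, hu w hw, hv w hw, add_zero]

theorem iorth_smul_mem (X : Set ↥T0t.adjoint.domain) (c : ℂ) (u : ↥T0t.adjoint.domain)
    (hu : u ∈ iorth T0 T0t hW X) : c • u ∈ iorth T0 T0t hW X := by
  intro w hw
  rw [bform_eq, _root_.map_smul, inner_smul_right, ← bform_eq, hu w hw, mul_zero]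

theorem subset_iorth_iorth (hP : IsDualPairT12 T0 T0t lam) (X : Set ↥T0t.adjoint.domain) :
    X ⊆ iorth T0 T0t hW (iorth T0 T0t hW X) := by
  intro x hx v hv
  rw [bform_herm hW hP, hv x hx]
  simp

set_option synthInstance.maxHeartbeats 1000000 in
theorem iorth_iorth_eq (hP : IsDualPairT12 T0 T0t lam) (X : Submodule ℂ ↥T0t.adjoint.domain)
    (hcl : GClosed T0t (X : Set _)) (h0 : W0set T0 T0t ⊆ (X : Set _)) :
    iorth T0 T0t hW (iorth T0 T0t hW (X : Set _)) = (X : Set _) := by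
  refine Set.Subset.antisymm ?_ (subset_iorth_iorth hW hP _)
  intro u hu
  set A : Submodule ℂ (WithLp 2 (H × H)) := X.map (Jlin T0t) with hA
  have hAclosed : IsClosed (A : Set (WithLp 2 (H × H))) := by
    rw [← isSeqClosed_iff_isClosed]
    intro f e hf hfe
    simp only [hA, SetLike.mem_coe, Submodule.mem_map] at hf
    choose x hxX hJx using hf
    have hfx : Tendsto (fun n => Jlin T0t (x n)) atTop (𝓝 e) := by
      have : (fun n => Jlin T0t (x n)) = f := funext hJx
      rwa [this]
    obtain ⟨l, hl, hgd⟩ := exists_of_tendsto_Jlin hP hfx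
    exact hl ▸ Submodule.mem_map_of_mem (hcl x hxX l hgd)
  haveI : CompleteSpace A := hAclosed.completeSpace_coe
  have hJu : Jlin T0t u ∈ Aᗮᗮ := by
    rw [Submodule.mem_orthogonal]
    intro p hp
    -- `p = K v` for some `v ∈ X^[⊥]`
    set a : H := p.fst with ha
    set b : H := p.snd with hb
    have key : ∀ φ : T0.domain, ⟪-b, (φ : H)⟫ = ⟪a, T0 φ⟫ := by
      intro φ
      have hφW : (φ : H) ∈ T0t.adjoint.domain := (le_T1 hP).1 φ.2
      have hφX : (⟨(φ : H), hφW⟩ : T0t.adjoint.domain) ∈ X :=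
        h0 (T0.le_closure.1 φ.2)
      have hJφA : Jlin T0t ⟨(φ : H), hφW⟩ ∈ A := Submodule.mem_map_of_mem hφX
      have horto : ⟪Jlin T0t ⟨(φ : H), hφW⟩, p⟫ = 0 := hp _ hJφA
      rw [WithLp.prod_inner_apply, WithLp.ofLp_fst, WithLp.ofLp_fst, WithLp.ofLp_snd, WithLp.ofLp_snd, Jlin_fst, Jlin_snd] at horto
      have hT1φ : T0t.adjoint (⟨(φ : H), hφW⟩ : T0t.adjoint.domain) = T0 φ :=
        ((le_T1 hP).2 rfl).symm
      rw [hT1φ] at horto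
      have h1 : ⟪T0 φ, a⟫ = ⟪(φ : H), -b⟫ := by
        rw [inner_neg_right]
        linear_combination horto
      rw [← inner_conj_symm, ← h1, inner_conj_symm]
    have hamem : a ∈ T0.adjoint.domain :=
      mem_adjoint_domain_of_exists a ⟨-b, fun φ => key φ⟩
    have haval : T0.adjoint ⟨a, hamem⟩ = -b :=
      adjoint_apply_eq (dense0 hP) ⟨a, hamem⟩ (fun φ => key φ)
    set v : T0t.adjoint.domain := ⟨a, hW.ge hamem⟩ with hv
    have hKv : Klin T0 T0t hW v = p := by
      have h2 : (Klin T0 T0t hW v).snd = p.snd := by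
        rw [Klin_snd]
        rw [show (⟨(v : H), hW.le v.2⟩ : T0.adjoint.domain) = ⟨a, hamem⟩ from Subtype.ext rfl]
        rw [haval, neg_neg, hb]
      have h1 : (Klin T0 T0t hW v).fst = p.fst := ha
      exact (WithLp.ext_iff _).2 (Prod.ext h1 h2)
    have hviorth : v ∈ iorth T0 T0t hW (X : Set _) := by
      intro x hx
      rw [bform_herm hW hP, bform_eq, hKv]
      have : ⟪Jlin T0t x, p⟫ = 0 := hp _ (Submodule.mem_map_of_mem hx)
      rw [← inner_conj_symm, this]
      simp
    have := hu v hviorth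
    rw [bform_eq, hKv] at this
    exact this
  rw [Submodule.orthogonal_orthogonal] at hJu
  obtain ⟨x, hxX, hxe⟩ := hJu
  have hxu : x = u := by
    have := congrArg (fun e : WithLp 2 (H × H) => e.snd) hxe
    exact Subtype.ext this
  rwa [← hxu]

end MainLemmas

end FriedrichsAux
/-- Theorem 2.3 (vi), second part: `X^[⊥]` is always a graph-norm closed subspace
of `W`; and for a subspace `X` of `W`, `X^[⊥][⊥] = X` iff `X` is graph-norm
closed and `W₀ ⊆ X`. -/
theorem iorth_closed_and_double_iorth
    (T0 T0t : H →ₗ.[ℂ] H) (lam : ℝ) (hP : IsDualPairT12 T0 T0t lam)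
    (hW : T0t.adjoint.domain = T0.adjoint.domain) :
    (∀ X : Set ↥T0t.adjoint.domain,
      GClosed T0t (iorth T0 T0t hW X) ∧
      (0 : ↥T0t.adjoint.domain) ∈ iorth T0 T0t hW X ∧
      (∀ u v, u ∈ iorth T0 T0t hW X → v ∈ iorth T0 T0t hW X →
        u + v ∈ iorth T0 T0t hW X) ∧
      (∀ (c : ℂ) u, u ∈ iorth T0 T0t hW X → c • u ∈ iorth T0 T0t hW X)) ∧
    (∀ X : Submodule ℂ ↥T0t.adjoint.domain,
      iorth T0 T0t hW (iorth T0 T0t hW (X : Set _)) = (X : Set _) ↔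
        (GClosed T0t (X : Set _) ∧ W0set T0 T0t ⊆ (X : Set _))) := by
  constructor
  · intro X
    exact ⟨FriedrichsAux.iorth_gclosed hW X, FriedrichsAux.iorth_zero_mem hW X,
      FriedrichsAux.iorth_add_mem hW X, FriedrichsAux.iorth_smul_mem hW X⟩
  · intro X
    constructor
    · intro h
      refine ⟨?_, ?_⟩
      · rw [← h]
        exact FriedrichsAux.iorth_gclosed hW _
      · rw [← h]
        exact FriedrichsAux.W0_subset_iorth hW hP _
    · rintro ⟨hcl, h0⟩
      exact FriedrichsAux.iorth_iorth_eq hW hP X hcl h0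
end
end

section
/- Let (T0, T̃0) be a joint pair of abstract Friedrichs operators on a complex Hilbert space H. Then the graph space decomposes as W = W0 ∔ ker T1 ∔ ker T̃1, where the sums are direct, the three subspaces are pairwise [·|·]-orthogonal (i.e. [u|v] = 0 whenever u, v lie in two distinct summands), W0 ∔ ker T1 ⊆ W⁻ and W0 ∔ ker T̃1 ⊆ W⁺. Moreover, the linear projections p_k : W → ker T1 and p_k̃ : W → ker T̃1 associated with this decomposition are continuous from (W, graph norm) to (H, ‖·‖). -/
open scoped InnerProductSpace
open Filter Topology LinearPMap

noncomputable section

variable {H : Type*} [NormedAddCommGroup H] [InnerProductSpace ℂ H] [CompleteSpace H]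

set_option linter.unusedSectionVars false

section AuxLemmas


lemma gen_adjoint_isClosed (T : H →ₗ.[ℂ] H) (hdT : Dense (T.domain : Set H)) :
    T.adjoint.IsClosed := by
  have hgraph : (T.adjoint.graph : Set (H × H)) =
      ⋂ (ψ : T.domain), {p : H × H | ⟪p.2, (ψ : H)⟫_ℂ = ⟪p.1, T ψ⟫_ℂ} := by
    ext p
    simp only [Set.mem_iInter, Set.mem_setOf_eq, SetLike.mem_coe]
    constructor
    · rintro hp ψ
      rcases T.adjoint.mem_graph_iff.1 hp with ⟨x, hx1, hx2⟩
      rw [← hx1]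
      rw [← hx2]
      exact T.adjoint_isFormalAdjoint hdT x ψ
    · intro hp
      have hmem : p.1 ∈ T.adjoint.domain :=
        LinearPMap.mem_adjoint_domain_of_exists _ ⟨p.2, fun ψ => hp ψ⟩
      have happ : T.adjoint ⟨p.1, hmem⟩ = p.2 :=
        LinearPMap.adjoint_apply_eq hdT _ (fun ψ => hp ψ)
      exact T.adjoint.mem_graph_iff.2 ⟨⟨p.1, hmem⟩, rfl, happ⟩
  rw [LinearPMap.IsClosed, hgraph]
  exact isClosed_iInter fun ψ => isClosed_eq
    ((continuous_snd.inner continuous_const)) ((continuous_fst.inner continuous_const))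

lemma gen_closure_of_closed (f : H →ₗ.[ℂ] H) (hf : f.IsClosed) : f.closure = f := by
  have h1 := hf.isClosable.graph_closure_eq_closure_graph
  have h2 : f.graph.topologicalClosure = f.graph :=
    SetLike.ext' (by rw [Submodule.topologicalClosure_coe]; exact hf.closure_eq)
  exact (LinearPMap.eq_of_eq_graph (h1.symm.trans h2)).symm ▸ rfl

lemma gen_isClosable (A B : H →ₗ.[ℂ] H) (hdB : Dense (B.domain : Set H))
    (hsym : B.IsFormalAdjoint A) : A.IsClosable :=
  ((gen_adjoint_isClosed B hdB).isClosable).leIsClosable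
    (LinearPMap.IsFormalAdjoint.le_adjoint hdB hsym)

lemma gen_closure_le (A B : H →ₗ.[ℂ] H) (hdB : Dense (B.domain : Set H))
    (hsym : B.IsFormalAdjoint A) : A.closure ≤ B.adjoint := by
  have h1 : A.closure ≤ (B.adjoint).closure :=
    LinearPMap.IsClosable.closure_mono (gen_adjoint_isClosed B hdB).isClosable
      (LinearPMap.IsFormalAdjoint.le_adjoint hdB hsym)
  rwa [gen_closure_of_closed _ (gen_adjoint_isClosed B hdB)] at h1

lemma gen_mem_closure_graph (A : H →ₗ.[ℂ] H) (hcl : A.IsClosable) (a : H)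
    (ha : a ∈ A.closure.domain) :
    ((a, A.closure ⟨a, ha⟩) : H × H) ∈ closure (A.graph : Set (H × H)) := by
  have h1 : ((a, A.closure ⟨a, ha⟩) : H × H) ∈ A.closure.graph :=
    A.closure.mem_graph ⟨a, ha⟩
  rw [← hcl.graph_closure_eq_closure_graph] at h1
  rwa [← Submodule.topologicalClosure_coe]

lemma gen_pairing (A : H →ₗ.[ℂ] H) (hcl : A.IsClosable) (v w : H)
    (hvw : ∀ φ : A.domain, ⟪w, (φ : H)⟫_ℂ = ⟪v, A φ⟫_ℂ) (a : H)
    (ha : a ∈ A.closure.domain) : ⟪w, a⟫_ℂ = ⟪v, A.closure ⟨a, ha⟩⟫_ℂ := by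
  have hZ : IsClosed {p : H × H | ⟪w, p.1⟫_ℂ = ⟪v, p.2⟫_ℂ} :=
    isClosed_eq (continuous_const.inner continuous_fst) (continuous_const.inner continuous_snd)
  have hsub : (A.graph : Set (H × H)) ⊆ {p : H × H | ⟪w, p.1⟫_ℂ = ⟪v, p.2⟫_ℂ} := by
    rintro p hp
    rcases A.mem_graph_iff.1 hp with ⟨x, hx1, hx2⟩
    rw [Set.mem_setOf_eq, ← hx1, ← hx2]
    exact hvw x
  exact hZ.closure_subset_iff.2 hsub (gen_mem_closure_graph A hcl a ha)

lemma gen_mem_closure_range (A : H →ₗ.[ℂ] H) (hcl : A.IsClosable) (a : H)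
    (ha : a ∈ A.closure.domain) :
    A.closure ⟨a, ha⟩ ∈ (LinearMap.range A.toFun).topologicalClosure := by
  have h1 := gen_mem_closure_graph A hcl a ha
  have h2 : A.closure ⟨a, ha⟩ ∈ closure (Prod.snd '' (A.graph : Set (H × H))) := by
    exact image_closure_subset_closure_image (s := (A.graph : Set (H × H)))
      (continuous_snd) ⟨_, h1, rfl⟩
  rw [← SetLike.mem_coe, Submodule.topologicalClosure_coe]
  refine closure_mono ?_ h2
  rintro y ⟨p, hp, rfl⟩
  rcases A.mem_graph_iff.1 hp with ⟨x, _, hx2⟩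
  exact ⟨x, hx2⟩

lemma gen_flip (A B : H →ₗ.[ℂ] H) (C : H →L[ℂ] H)
    (hC : ∀ (x : H) (hx : x ∈ A.domain) (hx' : x ∈ B.domain),
      C x = A ⟨x, hx⟩ + B ⟨x, hx'⟩)
    (hAB : A.domain = B.domain) (hcl : A.IsClosable) (hclB : B.IsClosable)
    (a : H) (ha : a ∈ A.closure.domain) :
    ∃ hb : a ∈ B.closure.domain, B.closure ⟨a, hb⟩ = C a - A.closure ⟨a, ha⟩ := by
  have h1 := gen_mem_closure_graph A hcl a ha
  set Φ : H × H →L[ℂ] H × H :=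
    (ContinuousLinearMap.fst ℂ H H).prod (C.comp (ContinuousLinearMap.fst ℂ H H) -
      ContinuousLinearMap.snd ℂ H H) with hΦ
  have hmaps : Φ '' (A.graph : Set (H × H)) ⊆ (B.graph : Set (H × H)) := by
    rintro q ⟨p, hp, rfl⟩
    rcases A.mem_graph_iff.1 hp with ⟨x, hx1, hx2⟩
    refine B.mem_graph_iff.2 ⟨⟨(x : H), hAB.le x.2⟩, ?_, ?_⟩
    · simp [hΦ, ← hx1]
    · have := hC (x : H) x.2 (hAB.le x.2)
      simp only [hΦ, ContinuousLinearMap.prod_apply, ContinuousLinearMap.sub_apply,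
        ContinuousLinearMap.comp_apply, ContinuousLinearMap.coe_fst',
        ContinuousLinearMap.coe_snd', ← hx1, ← hx2]
      rw [this]
      abel
  have h2 : (Φ (a, A.closure ⟨a, ha⟩)) ∈ closure (B.graph : Set (H × H)) := by
    exact closure_mono hmaps (image_closure_subset_closure_image
      (s := (A.graph : Set (H × H))) Φ.continuous ⟨_, h1, rfl⟩)
  have h4 : ((a, C a - A.closure ⟨a, ha⟩) : H × H) ∈ B.closure.graph := by
    rw [← hclB.graph_closure_eq_closure_graph, ← SetLike.mem_coe,
      Submodule.topologicalClosure_coe]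
    simpa [hΦ] using h2
  rcases B.closure.mem_graph_iff.1 h4 with ⟨x, hx1, hx2⟩
  have hxa : (x : H) = a := hx1
  have hmem : a ∈ B.closure.domain := hxa ▸ x.2
  refine ⟨hmem, ?_⟩
  have : (⟨a, hmem⟩ : B.closure.domain) = x := Subtype.ext hxa.symm
  rw [this, hx2]

lemma cre_symm (x y : H) : (⟪x, y⟫_ℂ).re = (⟪y, x⟫_ℂ).re := by
  rw [← inner_conj_symm x y]; exact Complex.conj_re _

lemma gen_lower (A B : H →ₗ.[ℂ] H) (C : H →L[ℂ] H) (mu : ℝ)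
    (hsym : B.IsFormalAdjoint A)
    (hC : ∀ (x : H) (hx : x ∈ A.domain) (hx' : x ∈ B.domain),
      C x = A ⟨x, hx⟩ + B ⟨x, hx'⟩)
    (hAB : A.domain = B.domain)
    (hco : ∀ x : H, 2 * mu * ‖x‖ ^ 2 ≤ (⟪x, C x⟫_ℂ).re)
    (φ : A.domain) : mu * ‖(φ : H)‖ ≤ ‖A φ‖ := by
  set x : H := (φ : H)
  have hre : (⟪x, B ⟨x, hAB.le φ.2⟩⟫_ℂ).re = (⟪x, A φ⟫_ℂ).re := by
    rw [cre_symm]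
    have h := hsym ⟨x, hAB.le φ.2⟩ φ
    rw [h]
  have h1 : 2 * mu * ‖x‖ ^ 2 ≤ 2 * (⟪x, A φ⟫_ℂ).re := by
    have h2 := hco x
    rw [hC x φ.2 (hAB.le φ.2), inner_add_right] at h2
    simp only [Complex.add_re] at h2
    have : (⟪x, A ⟨x, φ.2⟩⟫_ℂ).re = (⟪x, A φ⟫_ℂ).re := rfl
    linarith [hre, h2, this]
  have h3 : (⟪x, A φ⟫_ℂ).re ≤ ‖x‖ * ‖A φ‖ := by
    calc (⟪x, A φ⟫_ℂ).re ≤ ‖(⟪x, A φ⟫_ℂ)‖ := Complex.re_le_norm _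
    _ ≤ ‖x‖ * ‖A φ‖ := norm_inner_le_norm _ _
  have h4 : mu * ‖x‖ ^ 2 ≤ ‖x‖ * ‖A φ‖ := by linarith
  rcases eq_or_lt_of_le (norm_nonneg x) with h0 | h0
  · rw [← h0, mul_zero]; exact norm_nonneg _
  · rw [pow_two] at h4
    nlinarith

lemma gen_range_closure_realized (A : H →ₗ.[ℂ] H) (mu : ℝ) (hmu : 0 < mu)
    (hcl : A.IsClosable)
    (hlow : ∀ φ : A.domain, mu * ‖(φ : H)‖ ≤ ‖A φ‖)
    (y : H) (hy : y ∈ (LinearMap.range A.toFun).topologicalClosure) :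
    ∃ (a : H) (ha : a ∈ A.closure.domain), A.closure ⟨a, ha⟩ = y := by
  rw [← SetLike.mem_coe, Submodule.topologicalClosure_coe] at hy
  rcases mem_closure_iff_seq_limit.1 hy with ⟨s, hs, hslim⟩
  choose φ hφ using hs
  -- φ n : A.domain with A (φ n) = s n
  have hcauchy : CauchySeq (fun n => ((φ n : H) : H)) := by
    have hsc : CauchySeq s := hslim.cauchySeq
    rw [Metric.cauchySeq_iff] at hsc ⊢
    intro ε hε
    rcases hsc (mu * ε) (by positivity) with ⟨N, hN⟩
    refine ⟨N, fun m hm n hn => ?_⟩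
    have h1 := hlow (φ m - φ n)
    have h2 : ((φ m - φ n : A.domain) : H) = (φ m : H) - (φ n : H) := rfl
    have h3 : A (φ m - φ n) = s m - s n := by
      rw [LinearPMap.map_sub]; show A.toFun _ - A.toFun _ = _; rw [hφ m, hφ n]
    rw [h2, h3] at h1
    have h4 : dist (s m) (s n) < mu * ε := hN m hm n hn
    rw [dist_eq_norm] at h4 ⊢
    nlinarith [norm_nonneg ((φ m : H) - (φ n : H))]
  rcases cauchySeq_tendsto_of_complete hcauchy with ⟨a, halim⟩
  have hgraph : ((a, y) : H × H) ∈ closure (A.graph : Set (H × H)) := by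
    refine mem_closure_of_tendsto (halim.prodMk_nhds hslim) ?_
    filter_upwards with n
    exact A.mem_graph_iff.2 ⟨φ n, rfl, hφ n⟩
  rw [← Submodule.topologicalClosure_coe, SetLike.mem_coe,
    hcl.graph_closure_eq_closure_graph] at hgraph
  rcases A.closure.mem_graph_iff.1 hgraph with ⟨x, hx1, hx2⟩
  have hxa : (x : H) = a := hx1
  have hmem : a ∈ A.closure.domain := hxa ▸ x.2
  refine ⟨a, hmem, ?_⟩
  have : (⟨a, hmem⟩ : A.closure.domain) = x := Subtype.ext hxa.symm
  rw [this, hx2]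

lemma gen_ker_adjoint_iff (A : H →ₗ.[ℂ] H) (hdA : Dense (A.domain : Set H)) (x : H) :
    x ∈ ((LinearMap.range A.toFun).topologicalClosure)ᗮ ↔
      ∃ hx : x ∈ A.adjoint.domain, A.adjoint ⟨x, hx⟩ = 0 := by
  constructor
  · intro hx
    have horth : ∀ φ : A.domain, ⟪(0 : H), (φ : H)⟫_ℂ = ⟪x, A φ⟫_ℂ := by
      intro φ
      have h1 : A φ ∈ (LinearMap.range A.toFun).topologicalClosure :=
        Submodule.le_topologicalClosure _ ⟨φ, rfl⟩
      have h2 := (Submodule.mem_orthogonal' _ x).1 hx (A φ) h1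
      rw [inner_zero_left, h2]
    have hmem : x ∈ A.adjoint.domain :=
      LinearPMap.mem_adjoint_domain_of_exists _ ⟨0, horth⟩
    exact ⟨hmem, LinearPMap.adjoint_apply_eq hdA _ horth⟩
  · rintro ⟨hx, hx0⟩
    rw [Submodule.mem_orthogonal']
    intro u hu
    rw [← SetLike.mem_coe, Submodule.topologicalClosure_coe] at hu
    have hcl : IsClosed {u : H | ⟪x, u⟫_ℂ = 0} :=
      isClosed_eq (continuous_const.inner continuous_id) continuous_const
    refine hcl.closure_subset_iff.2 ?_ hu
    rintro u' ⟨φ, rfl⟩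
    have h1 := A.adjoint_isFormalAdjoint hdA ⟨x, hx⟩ φ
    rw [hx0] at h1
    have h2 : ⟪x, A φ⟫_ℂ = ⟪(0 : H), (φ : H)⟫_ℂ := h1.symm
    show ⟪x, A φ⟫_ℂ = 0
    rw [h2, inner_zero_left]

lemma aux_laxmilgram (K : Submodule ℂ H) (hK : IsClosed (K : Set H)) (C : H →L[ℂ] H)
    (mu : ℝ) (hmu : 0 < mu)
    (hco : ∀ x : H, 2 * mu * ‖x‖ ^ 2 ≤ (⟪x, C x⟫_ℂ).re)
    (k : H) (hk : k ∈ K) : ∃ c ∈ K, C c - k ∈ Kᗮ := by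
  haveI : CompleteSpace K := hK.completeSpace_coe
  set S : K →L[ℂ] K := (K.orthogonalProjection).comp (C.comp K.subtypeL) with hS
  have hSapply : ∀ c : K, S c = K.orthogonalProjection (C (c : H)) := fun c => rfl
  have hproj : ∀ c : K, (⟪((S c : K) : H), (c : H)⟫_ℂ) = ⟪C (c : H), (c : H)⟫_ℂ := by
    intro c
    have h1 : C (c : H) - K.orthogonalProjection (C (c : H)) ∈ Kᗮ :=
      Submodule.sub_starProjection_mem_orthogonal _
    have h2 : ⟪C (c : H) - K.orthogonalProjection (C (c : H)), (c : H)⟫_ℂ = 0 :=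
      (Submodule.mem_orthogonal' _ _).1 h1 _ c.2
    rw [inner_sub_left, sub_eq_zero] at h2
    rw [hSapply]
    exact h2.symm
  have hcoer : ∀ c : K, 2 * mu * ‖c‖ ^ 2 ≤ (⟪S c, c⟫_ℂ).re := by
    intro c
    have h1 : (⟪S c, c⟫_ℂ) = ⟪((S c : K) : H), (c : H)⟫_ℂ := rfl
    rw [h1, hproj c, cre_symm]
    exact hco (c : H)
  have hlow : ∀ c : K, 2 * mu * ‖c‖ ≤ ‖S c‖ := by
    intro c
    rcases eq_or_ne c 0 with rfl | hc
    · simp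
    · have h1 := hcoer c
      have h2 : (⟪S c, c⟫_ℂ).re ≤ ‖S c‖ * ‖c‖ := by
        calc (⟪S c, c⟫_ℂ).re ≤ ‖(⟪S c, c⟫_ℂ)‖ := Complex.re_le_norm _
        _ ≤ ‖S c‖ * ‖c‖ := norm_inner_le_norm _ _
      have hc' : 0 < ‖c‖ := norm_pos_iff.2 hc
      rw [pow_two] at h1
      nlinarith
  have hanti : AntilipschitzWith (⟨(2 * mu)⁻¹, by positivity⟩ : NNReal) S := by
    apply S.antilipschitz_of_bound
    intro x
    have h1 := hlow x
    show ‖x‖ ≤ (2 * mu)⁻¹ * ‖S x‖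
    have h3 : (2 * mu)⁻¹ * (2 * mu * ‖x‖) ≤ (2 * mu)⁻¹ * ‖S x‖ :=
      mul_le_mul_of_nonneg_left h1 (by positivity)
    calc ‖x‖ = (2 * mu)⁻¹ * (2 * mu * ‖x‖) := by field_simp
    _ ≤ (2 * mu)⁻¹ * ‖S x‖ := h3
  have hrange : IsClosed (Set.range S) := hanti.isClosed_range S.uniformContinuous
  have hrange' : LinearMap.range (S : K →ₗ[ℂ] K) = ⊤ := by
    haveI : CompleteSpace (LinearMap.range (S : K →ₗ[ℂ] K)) := by
      have : IsClosed ((LinearMap.range (S : K →ₗ[ℂ] K) : Submodule ℂ K) : Set K) := by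
        have he : ((LinearMap.range (S : K →ₗ[ℂ] K) : Submodule ℂ ↥K) : Set ↥K) = Set.range S :=
          LinearMap.coe_range _
        rw [he]; exact hrange
      exact this.completeSpace_coe
    rw [← Submodule.orthogonal_eq_bot_iff]
    rw [Submodule.eq_bot_iff]
    intro y hy
    have h1 : ⟪S y, y⟫_ℂ = 0 := (Submodule.mem_orthogonal _ _).1 hy _ ⟨y, rfl⟩
    have h2 := hcoer y
    rw [h1] at h2
    simp only [Complex.zero_re] at h2
    have h3 : ‖y‖ ^ 2 = 0 := le_antisymm (by nlinarith) (sq_nonneg _)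
    have h4 : ‖y‖ = 0 := by
      have := sq_eq_zero_iff.mp h3
      exact this
    exact norm_eq_zero.1 h4
  obtain ⟨c, hc⟩ := (LinearMap.range_eq_top.1 hrange') ⟨k, hk⟩
  refine ⟨(c : H), c.2, ?_⟩
  have h1 : K.orthogonalProjection (C (c : H)) = ⟨k, hk⟩ := by rw [← hSapply]; exact hc
  have h2 : C (c : H) - K.orthogonalProjection (C (c : H)) ∈ Kᗮ :=
    Submodule.sub_starProjection_mem_orthogonal _
  rw [h1] at h2
  exact h2

lemma aux_Cbar (T0 T0t : H →ₗ.[ℂ] H) (lam mu : ℝ)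
    (hF : IsFriedrichsPair T0 T0t lam mu) :
    ∃ C : H →L[ℂ] H,
      (∀ (x : H) (hx : x ∈ T0.domain) (hx' : x ∈ T0t.domain),
        C x = T0 ⟨x, hx⟩ + T0t ⟨x, hx'⟩) ∧
      (∀ x y : H, ⟪C x, y⟫_ℂ = ⟪x, C y⟫_ℂ) ∧
      (∀ x : H, 2 * mu * ‖x‖ ^ 2 ≤ (⟪x, C x⟫_ℂ).re) := by
  have hdense : Dense (T0.domain : Set H) := hF.dense'
  set g : T0.domain →ₗ[ℂ] H :=
    T0.toFun + T0t.toFun.comp (Submodule.inclusion hF.dom_eq.le) with hg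
  have hgapply : ∀ φ : T0.domain, g φ = T0 φ + T0t ⟨(φ : H), hF.dom_eq.le φ.2⟩ :=
    fun φ => rfl
  have hgbound : ∀ φ : T0.domain, ‖g φ‖ ≤ 2 * lam * ‖(φ : H)‖ := by
    intro φ
    rw [hgapply]
    exact hF.bound (φ : H) φ.2
  set f : T0.domain →L[ℂ] H := g.mkContinuous (2 * lam) hgbound with hf
  set e : T0.domain →L[ℂ] H := T0.domain.subtypeL with he
  have h_dense : DenseRange e := by
    have : Set.range (e : T0.domain → H) = (T0.domain : Set H) := Subtype.range_coe
    rw [DenseRange, this]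
    exact hdense
  have h_e : IsUniformInducing e := isometry_subtype_coe.isUniformInducing
  set C : H →L[ℂ] H := f.extend e with hC
  have hC0 : ∀ (x : H) (hx : x ∈ T0.domain) (hx' : x ∈ T0t.domain),
      C x = T0 ⟨x, hx⟩ + T0t ⟨x, hx'⟩ := by
    intro x hx hx'
    have h1 : C (e ⟨x, hx⟩) = f ⟨x, hx⟩ := ContinuousLinearMap.extend_eq f h_dense h_e _
    have h2 : e ⟨x, hx⟩ = x := rfl
    rw [h2] at h1
    rw [h1]
    exact hgapply ⟨x, hx⟩
  have hsym1 : T0t.IsFormalAdjoint T0 := by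
    intro x y
    have := hF.sym y x
    unfold pInner at this
    exact this.symm
  have hsymDD : ∀ φ ψ : T0.domain, ⟪C (φ : H), (ψ : H)⟫_ℂ = ⟪(φ : H), C (ψ : H)⟫_ℂ := by
    intro φ ψ
    rw [hC0 _ φ.2 (hF.dom_eq.le φ.2), hC0 _ ψ.2 (hF.dom_eq.le ψ.2)]
    rw [inner_add_left, inner_add_right]
    have h1 : ⟪T0t ⟨(φ : H), hF.dom_eq.le φ.2⟩, (ψ : H)⟫_ℂ = ⟪(φ : H), T0 ψ⟫_ℂ :=
      hsym1 ⟨(φ : H), hF.dom_eq.le φ.2⟩ ψ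
    have h2 : ⟪(φ : H), T0t ⟨(ψ : H), hF.dom_eq.le ψ.2⟩⟫_ℂ = ⟪T0 φ, (ψ : H)⟫_ℂ := by
      rw [← inner_conj_symm, hsym1 ⟨(ψ : H), hF.dom_eq.le ψ.2⟩ φ, inner_conj_symm]
    rw [h1, h2]
    ring
  have hCsym : ∀ x y : H, ⟪C x, y⟫_ℂ = ⟪x, C y⟫_ℂ := by
    have step1 : ∀ φ : T0.domain, ∀ y : H, ⟪C (φ : H), y⟫_ℂ = ⟪(φ : H), C y⟫_ℂ := by
      intro φ
      have hfun : (fun y => ⟪C (φ : H), y⟫_ℂ) = fun y => ⟪(φ : H), C y⟫_ℂ := by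
        apply Continuous.ext_on hdense
        · exact continuous_const.inner continuous_id
        · exact continuous_const.inner C.continuous
        · intro y hy
          exact hsymDD φ ⟨y, hy⟩
      intro y
      exact congrFun hfun y
    intro x y
    have hfun : (fun x => ⟪C x, y⟫_ℂ) = fun x => ⟪x, C y⟫_ℂ := by
      apply Continuous.ext_on hdense
      · exact (C.continuous.inner continuous_const)
      · exact (continuous_id.inner continuous_const)
      · intro x hx
        exact step1 ⟨x, hx⟩ y
    exact congrFun hfun x
  have hCco : ∀ x : H, 2 * mu * ‖x‖ ^ 2 ≤ (⟪x, C x⟫_ℂ).re := by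
    have hclosed : IsClosed {x : H | 2 * mu * ‖x‖ ^ 2 ≤ (⟪x, C x⟫_ℂ).re} := by
      apply isClosed_le
      · exact (continuous_const.mul ((continuous_norm).pow 2))
      · exact Complex.continuous_re.comp (continuous_id.inner C.continuous)
    have hsub : (T0.domain : Set H) ⊆ {x : H | 2 * mu * ‖x‖ ^ 2 ≤ (⟪x, C x⟫_ℂ).re} := by
      intro x hx
      have h1 := hF.coercive x hx
      unfold pInner at h1
      rw [Set.mem_setOf_eq, hC0 x hx (hF.dom_eq.le hx)]
      exact h1
    intro x
    have : x ∈ closure (T0.domain : Set H) := hdense x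
    exact (hclosed.closure_subset_iff.2 hsub) this
  exact ⟨C, hC0, hCsym, hCco⟩

end AuxLemmas

set_option maxHeartbeats 1000000 in
/-- Theorem 2.3 (ix): `W = W₀ ∔ ker T₁ ∔ ker T̃₁`, the summands are pairwise
`[·|·]`-orthogonal, `W₀ ∔ ker T₁ ⊆ W⁻`, `W₀ ∔ ker T̃₁ ⊆ W⁺`, and the associated
projections onto `ker T₁` and `ker T̃₁` are graph-norm-to-`H` continuous. -/
theorem graph_space_von_neumann_decomposition
    (T0 T0t : H →ₗ.[ℂ] H) (lam mu : ℝ) (hF : IsFriedrichsPair T0 T0t lam mu)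
    (hW : T0t.adjoint.domain = T0.adjoint.domain) :
    (∀ w : ↥T0t.adjoint.domain, ∃ a ∈ W0set T0 T0t, ∃ b ∈ kerT1set T0t,
      ∃ c ∈ kerT1tset T0 T0t hW, w = a + b + c) ∧
    (∀ a ∈ W0set T0 T0t, ∀ b ∈ kerT1set T0t, ∀ c ∈ kerT1tset T0 T0t hW,
      a + b + c = 0 → a = 0 ∧ b = 0 ∧ c = 0) ∧
    (∀ u v : ↥T0t.adjoint.domain,
      ((u ∈ W0set T0 T0t ∧ v ∈ kerT1set T0t) ∨ (u ∈ kerT1set T0t ∧ v ∈ W0set T0 T0t) ∨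
       (u ∈ W0set T0 T0t ∧ v ∈ kerT1tset T0 T0t hW) ∨
       (u ∈ kerT1tset T0 T0t hW ∧ v ∈ W0set T0 T0t) ∨
       (u ∈ kerT1set T0t ∧ v ∈ kerT1tset T0 T0t hW) ∨
       (u ∈ kerT1tset T0 T0t hW ∧ v ∈ kerT1set T0t)) →
      bform T0 T0t hW u v = 0) ∧
    (∀ a ∈ W0set T0 T0t, ∀ b ∈ kerT1set T0t,
      (bform T0 T0t hW (a + b) (a + b)).re ≤ 0) ∧
    (∀ a ∈ W0set T0 T0t, ∀ c ∈ kerT1tset T0 T0t hW,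
      0 ≤ (bform T0 T0t hW (a + c) (a + c)).re) ∧
    (∀ pk pkt : ↥T0t.adjoint.domain →ₗ[ℂ] ↥T0t.adjoint.domain,
      (∀ u, pk u ∈ kerT1set T0t ∧ pkt u ∈ kerT1tset T0 T0t hW ∧
        u - pk u - pkt u ∈ W0set T0 T0t) →
      (∃ C, ∀ u, ‖(pk u : H)‖ ≤ C * gnorm T0t u) ∧
      (∃ C, ∀ u, ‖(pkt u : H)‖ ≤ C * gnorm T0t u)) := by
  obtain ⟨C, hC0, hCsym, hCco⟩ := aux_Cbar T0 T0t lam mu hF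
  have hmu : 0 < mu := hF.mu_pos
  have hdense : Dense (T0.domain : Set H) := hF.dense'
  have hdom : T0.domain = T0t.domain := hF.dom_eq
  have hdenset : Dense (T0t.domain : Set H) := by rw [← hdom]; exact hdense
  have hsym1 : T0t.IsFormalAdjoint T0 := by
    intro x y
    have := hF.sym y x
    unfold pInner at this
    exact this.symm
  have hsym2 : T0.IsFormalAdjoint T0t := hsym1.symm
  have hC0t : ∀ (x : H) (hx : x ∈ T0t.domain) (hx' : x ∈ T0.domain),
      C x = T0t ⟨x, hx⟩ + T0 ⟨x, hx'⟩ := by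
    intro x hx hx'
    rw [hC0 x hx' hx, add_comm]
  have hclT0 : T0.IsClosable := gen_isClosable T0 T0t hdenset hsym1
  have hclT0t : T0t.IsClosable := gen_isClosable T0t T0 hdense hsym2
  have hleT0 : T0.closure ≤ T0t.adjoint := gen_closure_le T0 T0t hdenset hsym1
  have hleT0t : T0t.closure ≤ T0.adjoint := gen_closure_le T0t T0 hdense hsym2
  have hlow0 : ∀ φ : T0.domain, mu * ‖(φ : H)‖ ≤ ‖T0 φ‖ :=
    gen_lower T0 T0t C mu hsym1 hC0 hdom hCco
  have hadj0 := T0.adjoint_isFormalAdjoint hdense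
  have hadj0t := T0t.adjoint_isFormalAdjoint hdenset
  -- the identity `T₁ u + T̃₁ u = C u` on `W`
  have hsum : ∀ (u : H) (h1 : u ∈ T0t.adjoint.domain) (h2 : u ∈ T0.adjoint.domain),
      T0t.adjoint ⟨u, h1⟩ + T0.adjoint ⟨u, h2⟩ = C u := by
    intro u h1 h2
    have key : ∀ φ : T0.domain,
        ⟪T0t.adjoint ⟨u, h1⟩ + T0.adjoint ⟨u, h2⟩ - C u, (φ : H)⟫_ℂ = 0 := by
      intro φ
      rw [inner_sub_left, inner_add_left]
      have e1 : ⟪T0t.adjoint ⟨u, h1⟩, (φ : H)⟫_ℂ = ⟪u, T0t ⟨(φ : H), hdom.le φ.2⟩⟫_ℂ :=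
        hadj0t ⟨u, h1⟩ ⟨(φ : H), hdom.le φ.2⟩
      have e2 : ⟪T0.adjoint ⟨u, h2⟩, (φ : H)⟫_ℂ = ⟪u, T0 φ⟫_ℂ := hadj0 ⟨u, h2⟩ φ
      have e3 : ⟪C u, (φ : H)⟫_ℂ = ⟪u, C (φ : H)⟫_ℂ := hCsym u (φ : H)
      rw [e1, e2, e3, hC0 (φ : H) φ.2 (hdom.le φ.2), inner_add_right]
      ring
    have hz : T0t.adjoint ⟨u, h1⟩ + T0.adjoint ⟨u, h2⟩ - C u = 0 := by
      set z := T0t.adjoint ⟨u, h1⟩ + T0.adjoint ⟨u, h2⟩ - C u with hzdef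
      have hfun : (fun x : H => ⟪z, x⟫_ℂ) = fun _ : H => (0 : ℂ) := by
        apply Continuous.ext_on hdense
        · exact continuous_const.inner continuous_id
        · exact continuous_const
        · intro x hx
          exact key ⟨x, hx⟩
      have h0 : ⟪z, z⟫_ℂ = 0 := congrFun hfun z
      exact inner_self_eq_zero.1 h0
    exact sub_eq_zero.1 hz
  have hsum' : ∀ u : ↥T0t.adjoint.domain,
      T0t.adjoint u + T0.adjoint ⟨(u : H), hW.le u.2⟩ = C (u : H) :=
    fun u => hsum (u : H) u.2 (hW.le u.2)
  set R : Submodule ℂ H := (LinearMap.range T0.toFun).topologicalClosure with hRdef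
  set Rt : Submodule ℂ H := (LinearMap.range T0t.toFun).topologicalClosure with hRtdef
  have hRclosed : IsClosed (R : Set H) := Submodule.isClosed_topologicalClosure _
  haveI : CompleteSpace R := hRclosed.completeSpace_coe
  have hker0t : ∀ x : H, x ∈ Rᗮ ↔ ∃ hx : x ∈ T0.adjoint.domain, T0.adjoint ⟨x, hx⟩ = 0 :=
    gen_ker_adjoint_iff T0 hdense
  have hker1 : ∀ x : H, x ∈ Rtᗮ ↔ ∃ hx : x ∈ T0t.adjoint.domain, T0t.adjoint ⟨x, hx⟩ = 0 :=
    gen_ker_adjoint_iff T0t hdenset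
  have hW0T1 : ∀ (a : ↥T0t.adjoint.domain) (ha : (a : H) ∈ T0.closure.domain),
      T0t.adjoint a = T0.closure ⟨(a : H), ha⟩ := by
    intro a ha
    exact (hleT0.2 (x := ⟨(a : H), ha⟩) (y := a) rfl).symm
  have hW0T1mem : ∀ (a : ↥T0t.adjoint.domain) (ha : (a : H) ∈ T0.closure.domain),
      T0t.adjoint a ∈ R := by
    intro a ha
    rw [hW0T1 a ha]
    exact gen_mem_closure_range T0 hclT0 _ ha
  have hW0Tt1mem : ∀ (a : ↥T0t.adjoint.domain) (ha : (a : H) ∈ T0.closure.domain),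
      T0.adjoint ⟨(a : H), hW.le a.2⟩ ∈ Rt := by
    intro a ha
    obtain ⟨hb, hbeq⟩ := gen_flip T0 T0t C hC0 hdom hclT0 hclT0t (a : H) ha
    have h1 : T0.adjoint ⟨(a : H), hW.le a.2⟩ = T0t.closure ⟨(a : H), hb⟩ :=
      (hleT0t.2 (x := ⟨(a : H), hb⟩) rfl).symm
    rw [h1]
    exact gen_mem_closure_range T0t hclT0t _ hb
  have hbf : ∀ u v : ↥T0t.adjoint.domain, bform T0 T0t hW u v =
      ⟪(v : H), T0t.adjoint u⟫_ℂ - ⟪T0.adjoint ⟨(v : H), hW.le v.2⟩, (u : H)⟫_ℂ :=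
    fun u v => rfl
  have hW0left : ∀ u v : ↥T0t.adjoint.domain, (u : H) ∈ T0.closure.domain →
      bform T0 T0t hW u v = 0 := by
    intro u v hu
    rw [hbf]
    have hpair : ⟪T0.adjoint ⟨(v : H), hW.le v.2⟩, (u : H)⟫_ℂ =
        ⟪(v : H), T0.closure ⟨(u : H), hu⟩⟫_ℂ :=
      gen_pairing T0 hclT0 (v : H) (T0.adjoint ⟨(v : H), hW.le v.2⟩)
        (fun φ => hadj0 ⟨(v : H), hW.le v.2⟩ φ) (u : H) hu
    rw [hpair, hW0T1 u hu, sub_self]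
  have hherm : ∀ u v : ↥T0t.adjoint.domain,
      bform T0 T0t hW u v = (starRingEnd ℂ) (bform T0 T0t hW v u) := by
    intro u v
    rw [hbf, hbf, _root_.map_sub, inner_conj_symm, inner_conj_symm]
    have h1 : ⟪(v : H), T0t.adjoint u⟫_ℂ + ⟪(v : H), T0.adjoint ⟨(u : H), hW.le u.2⟩⟫_ℂ
        = ⟪(v : H), C (u : H)⟫_ℂ := by rw [← inner_add_right, hsum' u]
    have h2 : ⟪T0t.adjoint v, (u : H)⟫_ℂ + ⟪T0.adjoint ⟨(v : H), hW.le v.2⟩, (u : H)⟫_ℂ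
        = ⟪C (v : H), (u : H)⟫_ℂ := by rw [← inner_add_left, hsum' v]
    have h3 : ⟪C (v : H), (u : H)⟫_ℂ = ⟪(v : H), C (u : H)⟫_ℂ := hCsym _ _
    linear_combination h1 - h2 - h3
  have hkerC : ∀ b : ↥T0t.adjoint.domain, T0t.adjoint b = 0 →
      T0.adjoint ⟨(b : H), hW.le b.2⟩ = C (b : H) := by
    intro b hb
    have h1 := hsum' b
    rw [hb, zero_add] at h1
    exact h1
  have hkertC : ∀ c : ↥T0t.adjoint.domain, T0.adjoint ⟨(c : H), hW.le c.2⟩ = 0 →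
      T0t.adjoint c = C (c : H) := by
    intro c hc
    have h1 := hsum' c
    rw [hc, add_zero] at h1
    exact h1
  have hbc0 : ∀ b c : ↥T0t.adjoint.domain, T0t.adjoint b = 0 →
      T0.adjoint ⟨(c : H), hW.le c.2⟩ = 0 → bform T0 T0t hW b c = 0 := by
    intro b c hb hc
    rw [hbf, hb, hc, inner_zero_right, inner_zero_left, sub_zero]
  have hbb : ∀ b : ↥T0t.adjoint.domain, T0t.adjoint b = 0 →
      (bform T0 T0t hW b b).re ≤ -(2 * mu * ‖(b : H)‖ ^ 2) := by
    intro b hb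
    rw [hbf, hb, inner_zero_right, hkerC b hb, zero_sub, Complex.neg_re]
    have h1 := hCco (b : H)
    have h2 : (⟪C (b : H), (b : H)⟫_ℂ).re = (⟪(b : H), C (b : H)⟫_ℂ).re := cre_symm _ _
    linarith
  have hcc : ∀ c : ↥T0t.adjoint.domain, T0.adjoint ⟨(c : H), hW.le c.2⟩ = 0 →
      2 * mu * ‖(c : H)‖ ^ 2 ≤ (bform T0 T0t hW c c).re := by
    intro c hc
    rw [hbf, hc, inner_zero_left, sub_zero, hkertC c hc]
    exact hCco (c : H)
  have hbadd_left : ∀ u v w : ↥T0t.adjoint.domain,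
      bform T0 T0t hW (u + v) w = bform T0 T0t hW u w + bform T0 T0t hW v w := by
    intro u v w
    rw [hbf, hbf, hbf]
    have h1 : T0t.adjoint (u + v) = T0t.adjoint u + T0t.adjoint v := LinearPMap.map_add _ u v
    have h2 : ((u + v : ↥T0t.adjoint.domain) : H) = (u : H) + (v : H) := rfl
    rw [h1, inner_add_right, h2, inner_add_right]
    ring
  have hbadd_right : ∀ u v w : ↥T0t.adjoint.domain,
      bform T0 T0t hW u (v + w) = bform T0 T0t hW u v + bform T0 T0t hW u w := by
    intro u v w
    rw [hbf, hbf, hbf]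
    have h2 : ((v + w : ↥T0t.adjoint.domain) : H) = (v : H) + (w : H) := rfl
    have h3 : (⟨((v + w : ↥T0t.adjoint.domain) : H), hW.le (v + w).2⟩ : ↥T0.adjoint.domain)
        = ⟨(v : H), hW.le v.2⟩ + ⟨(w : H), hW.le w.2⟩ := by
      apply Subtype.ext
      exact h2
    rw [h3, LinearPMap.map_add, inner_add_left, h2, inner_add_left]
    ring
  have hbzero_left : ∀ v : ↥T0t.adjoint.domain, bform T0 T0t hW 0 v = 0 := by
    intro v
    rw [hbf]
    have h1 : T0t.adjoint (0 : ↥T0t.adjoint.domain) = 0 := LinearPMap.map_zero _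
    have h2 : ((0 : ↥T0t.adjoint.domain) : H) = 0 := rfl
    rw [h1, inner_zero_right, h2, inner_zero_right, sub_zero]
  refine ⟨?_, ?_, ?_, ?_, ?_, ?_⟩
  · -- existence of the decomposition
    intro w
    obtain ⟨y, hy, k, hk, hTw⟩ := R.exists_add_mem_mem_orthogonal (T0t.adjoint w)
    obtain ⟨a0, ha0, ha0eq⟩ := gen_range_closure_realized T0 mu hmu hclT0 hlow0 y hy
    obtain ⟨c, hcK, hc2⟩ :=
      aux_laxmilgram Rᗮ (Submodule.isClosed_orthogonal _) C mu hmu hCco k hk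
    have hRperp : Rᗮᗮ = R := Submodule.orthogonal_orthogonal R
    rw [hRperp] at hc2
    obtain ⟨a1, ha1, ha1eq⟩ := gen_range_closure_realized T0 mu hmu hclT0 hlow0 _ hc2
    obtain ⟨hcdom, hczero⟩ := (hker0t c).1 hcK
    have hcW : c ∈ T0t.adjoint.domain := hW.ge hcdom
    have hT1c : T0t.adjoint ⟨c, hcW⟩ = C c := hkertC ⟨c, hcW⟩ hczero
    have hadomsub : a0 - a1 ∈ T0.closure.domain := sub_mem ha0 ha1
    have haW : a0 - a1 ∈ T0t.adjoint.domain := hleT0.1 hadomsub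
    have hT1a : T0t.adjoint ⟨a0 - a1, haW⟩ = y - (C c - k) := by
      rw [hW0T1 ⟨a0 - a1, haW⟩ hadomsub]
      have h4 : (⟨a0 - a1, hadomsub⟩ : T0.closure.domain) = ⟨a0, ha0⟩ - ⟨a1, ha1⟩ := rfl
      rw [h4, LinearPMap.map_sub, ha0eq, ha1eq]
    refine ⟨⟨a0 - a1, haW⟩, hadomsub,
      w - ⟨a0 - a1, haW⟩ - ⟨c, hcW⟩, ?_, ⟨c, hcW⟩, hczero, ?_⟩
    · show T0t.adjoint _ = 0
      rw [LinearPMap.map_sub, LinearPMap.map_sub, hT1a, hT1c, hTw]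
      abel
    · abel
  · -- the sum is direct
    intro a ha b hb c hc habc
    have hbform0 : ∀ v, bform T0 T0t hW (a + b + c) v = 0 := by
      intro v; rw [habc]; exact hbzero_left v
    have hb0 : b = 0 := by
      have h1 := hbform0 b
      rw [hbadd_left, hbadd_left] at h1
      have h2 : bform T0 T0t hW a b = 0 := hW0left a b ha
      have h3 : bform T0 T0t hW c b = 0 := by
        rw [hherm c b, hbc0 b c hb hc, _root_.map_zero]
      rw [h2, h3, zero_add, add_zero] at h1
      have h4 := hbb b hb
      rw [h1] at h4
      simp only [Complex.zero_re] at h4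
      have h5 : ‖(b : H)‖ ^ 2 ≤ 0 := by nlinarith
      have h6 : ‖(b : H)‖ ^ 2 = 0 := le_antisymm h5 (sq_nonneg _)
      have h7 : (b : H) = 0 := norm_eq_zero.1 (sq_eq_zero_iff.mp h6)
      exact Subtype.ext h7
    have hc0 : c = 0 := by
      have h1 := hbform0 c
      rw [hbadd_left, hbadd_left] at h1
      rw [hW0left a c ha, hbc0 b c hb hc, zero_add, zero_add] at h1
      have h4 := hcc c hc
      rw [h1] at h4
      simp only [Complex.zero_re] at h4
      have h5 : ‖(c : H)‖ ^ 2 ≤ 0 := by nlinarith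
      have h6 : ‖(c : H)‖ ^ 2 = 0 := le_antisymm h5 (sq_nonneg _)
      have h7 : (c : H) = 0 := norm_eq_zero.1 (sq_eq_zero_iff.mp h6)
      exact Subtype.ext h7
    have ha0 : a = 0 := by
      rw [hb0, hc0, add_zero, add_zero] at habc
      exact habc
    exact ⟨ha0, hb0, hc0⟩
  · -- pairwise orthogonality
    rintro u v (⟨hu, hv⟩ | ⟨hu, hv⟩ | ⟨hu, hv⟩ | ⟨hu, hv⟩ | ⟨hu, hv⟩ | ⟨hu, hv⟩)
    · exact hW0left u v hu
    · rw [hherm, hW0left v u hv, _root_.map_zero]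
    · exact hW0left u v hu
    · rw [hherm, hW0left v u hv, _root_.map_zero]
    · exact hbc0 u v hu hv
    · rw [hherm, hbc0 v u hv hu, _root_.map_zero]
  · -- `W₀ ∔ ker T₁ ⊆ W⁻`
    intro a ha b hb
    have h1 : bform T0 T0t hW (a + b) (a + b) = bform T0 T0t hW b b := by
      rw [hbadd_left, hbadd_right, hbadd_right]
      rw [hW0left a a ha, hW0left a b ha]
      have h2 : bform T0 T0t hW b a = 0 := by
        rw [hherm b a, hW0left a b ha, _root_.map_zero]
      rw [h2]
      ring
    rw [h1]
    have h2 := hbb b hb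
    have h3 : 0 ≤ 2 * mu * ‖(b : H)‖ ^ 2 := by positivity
    linarith
  · -- `W₀ ∔ ker T̃₁ ⊆ W⁺`
    intro a ha c hc
    have h1 : bform T0 T0t hW (a + c) (a + c) = bform T0 T0t hW c c := by
      rw [hbadd_left, hbadd_right, hbadd_right]
      rw [hW0left a a ha, hW0left a c ha]
      have h2 : bform T0 T0t hW c a = 0 := by
        rw [hherm c a, hW0left a c ha, _root_.map_zero]
      rw [h2]
      ring
    rw [h1]
    have h2 := hcc c hc
    have h3 : 0 ≤ 2 * mu * ‖(c : H)‖ ^ 2 := by positivity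
    linarith
  · -- continuity of the projections
    intro pk pkt hdec
    have hgn : ∀ u : ↥T0t.adjoint.domain, gnorm T0t u = ‖(u : H)‖ + ‖T0t.adjoint u‖ :=
      fun u => rfl
    have hgnpos : ∀ u : ↥T0t.adjoint.domain, 0 ≤ gnorm T0t u := by
      intro u; rw [hgn]; positivity
    constructor
    · -- bound for the projection onto ker T₁
      refine ⟨(2 * mu)⁻¹ * (‖C‖ + 1), ?_⟩
      intro u
      obtain ⟨hbmem, hcmem, hamem⟩ := hdec u
      set b := pk u with hbdef
      set c := pkt u with hcdef
      set av : ↥T0t.adjoint.domain := u - pk u - pkt u with hav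
      have hsplit : u = av + b + c := by rw [hav]; abel
      have hTt1add : T0.adjoint ⟨(u : H), hW.le u.2⟩ =
          T0.adjoint ⟨(av : H), hW.le av.2⟩ + C (b : H) := by
        have h1 : (⟨(u : H), hW.le u.2⟩ : ↥T0.adjoint.domain) =
            ⟨(av : H), hW.le av.2⟩ + ⟨(b : H), hW.le b.2⟩ + ⟨(c : H), hW.le c.2⟩ := by
          apply Subtype.ext
          show (u : H) = (av : H) + (b : H) + (c : H)
          rw [hsplit]
          rfl
        rw [h1, LinearPMap.map_add, LinearPMap.map_add, hkerC b hbmem, hcmem, add_zero]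
      have hborth : (b : H) ∈ Rtᗮ := (hker1 (b : H)).2 ⟨b.2, hbmem⟩
      have haRt : T0.adjoint ⟨(av : H), hW.le av.2⟩ ∈ Rt := hW0Tt1mem av hamem
      have hinner0 : (⟪(b : H), T0.adjoint ⟨(av : H), hW.le av.2⟩⟫_ℂ).re = 0 := by
        have h1 := (Submodule.mem_orthogonal Rt (b : H)).1 hborth _ haRt
        rw [cre_symm, h1]
        simp
      have hco2 := hCco (b : H)
      have hre : (⟪(b : H), C (b : H)⟫_ℂ).re =
          (⟪(b : H), T0.adjoint ⟨(u : H), hW.le u.2⟩⟫_ℂ).re := by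
        rw [hTt1add, inner_add_right, Complex.add_re, hinner0, zero_add]
      have hb1 : (⟪(b : H), T0.adjoint ⟨(u : H), hW.le u.2⟩⟫_ℂ).re ≤
          ‖(b : H)‖ * ‖T0.adjoint ⟨(u : H), hW.le u.2⟩‖ := by
        calc (⟪(b : H), T0.adjoint ⟨(u : H), hW.le u.2⟩⟫_ℂ).re
            ≤ ‖(⟪(b : H), T0.adjoint ⟨(u : H), hW.le u.2⟩⟫_ℂ)‖ := Complex.re_le_norm _
        _ ≤ ‖(b : H)‖ * ‖T0.adjoint ⟨(u : H), hW.le u.2⟩‖ := norm_inner_le_norm _ _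
      have hTt1u : ‖T0.adjoint ⟨(u : H), hW.le u.2⟩‖ ≤ ‖C‖ * ‖(u : H)‖ + ‖T0t.adjoint u‖ := by
        have h3 : T0.adjoint ⟨(u : H), hW.le u.2⟩ = C (u : H) - T0t.adjoint u := by
          rw [← hsum' u]; abel
        rw [h3]
        calc ‖C (u : H) - T0t.adjoint u‖ ≤ ‖C (u : H)‖ + ‖T0t.adjoint u‖ := norm_sub_le _ _
        _ ≤ ‖C‖ * ‖(u : H)‖ + ‖T0t.adjoint u‖ := by
            have := C.le_opNorm (u : H); linarith
      have hkey : 2 * mu * ‖(b : H)‖ ^ 2 ≤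
          ‖(b : H)‖ * (‖C‖ * ‖(u : H)‖ + ‖T0t.adjoint u‖) := by
        rw [hre] at hco2
        have h5 : ‖(b : H)‖ * ‖T0.adjoint ⟨(u : H), hW.le u.2⟩‖ ≤
            ‖(b : H)‖ * (‖C‖ * ‖(u : H)‖ + ‖T0t.adjoint u‖) :=
          mul_le_mul_of_nonneg_left hTt1u (norm_nonneg _)
        linarith
    -- conclude
      rw [hgn]
      have hCn : (0 : ℝ) ≤ ‖C‖ := norm_nonneg _
      have hun : (0 : ℝ) ≤ ‖(u : H)‖ := norm_nonneg _
      have hTn : (0 : ℝ) ≤ ‖T0t.adjoint u‖ := norm_nonneg _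
      have hbn : (0 : ℝ) ≤ ‖(b : H)‖ := norm_nonneg _
      have hstep : ‖(b : H)‖ * (‖C‖ * ‖(u : H)‖ + ‖T0t.adjoint u‖) ≤
          ‖(b : H)‖ * ((‖C‖ + 1) * (‖(u : H)‖ + ‖T0t.adjoint u‖)) := by
        apply mul_le_mul_of_nonneg_left _ hbn
        nlinarith
      rcases eq_or_lt_of_le hbn with h0 | h0
      · rw [← h0]
        positivity
      · have h6 : 2 * mu * ‖(b : H)‖ ^ 2 ≤
            ‖(b : H)‖ * ((‖C‖ + 1) * (‖(u : H)‖ + ‖T0t.adjoint u‖)) := le_trans hkey hstep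
        rw [pow_two] at h6
        have h7 : 2 * mu * ‖(b : H)‖ ≤ (‖C‖ + 1) * (‖(u : H)‖ + ‖T0t.adjoint u‖) := by
          nlinarith
        have h8 : (2 * mu)⁻¹ * (2 * mu * ‖(b : H)‖) ≤
            (2 * mu)⁻¹ * ((‖C‖ + 1) * (‖(u : H)‖ + ‖T0t.adjoint u‖)) :=
          mul_le_mul_of_nonneg_left h7 (by positivity)
        calc ‖(b : H)‖ = (2 * mu)⁻¹ * (2 * mu * ‖(b : H)‖) := by field_simp
        _ ≤ (2 * mu)⁻¹ * ((‖C‖ + 1) * (‖(u : H)‖ + ‖T0t.adjoint u‖)) := h8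
        _ = (2 * mu)⁻¹ * (‖C‖ + 1) * (‖(u : H)‖ + ‖T0t.adjoint u‖) := by ring
    · -- bound for the projection onto ker T̃₁
      refine ⟨(2 * mu)⁻¹, ?_⟩
      intro u
      obtain ⟨hbmem, hcmem, hamem⟩ := hdec u
      set b := pk u with hbdef
      set c := pkt u with hcdef
      set av : ↥T0t.adjoint.domain := u - pk u - pkt u with hav
      have hsplit : u = av + b + c := by rw [hav]; abel
      have hT1add : T0t.adjoint u = T0t.adjoint av + C (c : H) := by
        have h1 : u = av + b + c := hsplit
        calc T0t.adjoint u = T0t.adjoint (av + b + c) := by rw [← h1]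
        _ = T0t.adjoint av + T0t.adjoint b + T0t.adjoint c := by
            rw [LinearPMap.map_add, LinearPMap.map_add]
        _ = T0t.adjoint av + C (c : H) := by
            rw [hbmem, hkertC c hcmem, add_zero]
      have hcorth : (c : H) ∈ Rᗮ := (hker0t (c : H)).2 ⟨hW.le c.2, hcmem⟩
      have haR : T0t.adjoint av ∈ R := hW0T1mem av hamem
      have hinner0 : (⟪(c : H), T0t.adjoint av⟫_ℂ).re = 0 := by
        have h1 := (Submodule.mem_orthogonal R (c : H)).1 hcorth _ haR
        rw [cre_symm, h1]
        simp
      have hco2 := hCco (c : H)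
      have hre : (⟪(c : H), C (c : H)⟫_ℂ).re = (⟪(c : H), T0t.adjoint u⟫_ℂ).re := by
        rw [hT1add, inner_add_right, Complex.add_re, hinner0, zero_add]
      have hc1 : (⟪(c : H), T0t.adjoint u⟫_ℂ).re ≤ ‖(c : H)‖ * ‖T0t.adjoint u‖ := by
        calc (⟪(c : H), T0t.adjoint u⟫_ℂ).re ≤ ‖(⟪(c : H), T0t.adjoint u⟫_ℂ)‖ :=
          Complex.re_le_norm _
        _ ≤ ‖(c : H)‖ * ‖T0t.adjoint u‖ := norm_inner_le_norm _ _
      have hkey : 2 * mu * ‖(c : H)‖ ^ 2 ≤ ‖(c : H)‖ * ‖T0t.adjoint u‖ := by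
        rw [hre] at hco2
        linarith
      rw [hgn]
      have hun : (0 : ℝ) ≤ ‖(u : H)‖ := norm_nonneg _
      have hTn : (0 : ℝ) ≤ ‖T0t.adjoint u‖ := norm_nonneg _
      have hcn : (0 : ℝ) ≤ ‖(c : H)‖ := norm_nonneg _
      rcases eq_or_lt_of_le hcn with h0 | h0
      · rw [← h0]
        positivity
      · rw [pow_two] at hkey
        have h7 : 2 * mu * ‖(c : H)‖ ≤ ‖(u : H)‖ + ‖T0t.adjoint u‖ := by
          nlinarith
        have h8 : (2 * mu)⁻¹ * (2 * mu * ‖(c : H)‖) ≤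
            (2 * mu)⁻¹ * (‖(u : H)‖ + ‖T0t.adjoint u‖) :=
          mul_le_mul_of_nonneg_left h7 (by positivity)
        calc ‖(c : H)‖ = (2 * mu)⁻¹ * (2 * mu * ‖(c : H)‖) := by field_simp
        _ ≤ (2 * mu)⁻¹ * (‖(u : H)‖ + ‖T0t.adjoint u‖) := h8
end
end

section
/- Let (T0, T̃0) be a joint pair of abstract Friedrichs operators on a complex Hilbert space H with constant μ > 0 from (T3), and let V ⊆ W be a subspace that is closed with respect to the graph norm, contains W0, and satisfies V ⊆ W⁺ and V^[⊥] ⊆ W⁻. Then T1 restricted to V is a bijection from V onto H, T̃1 restricted to V^[⊥] is a bijection from V^[⊥] onto H, and for every u ∈ V one has the a priori estimate ‖u‖ + ‖T1 u‖ ≤ (1 + 1/μ)‖T1 u‖; the same estimate holds with T̃1 and V^[⊥] in place of T1 and V. -/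
open scoped InnerProductSpace
open Filter Topology LinearPMap

noncomputable section

variable {H : Type*} [NormedAddCommGroup H] [InnerProductSpace ℂ H] [CompleteSpace H]

private lemma friedrichs_exists_S {H : Type*} [NormedAddCommGroup H] [InnerProductSpace ℂ H]
    [CompleteSpace H] (T0 T0t : H →ₗ.[ℂ] H) {lam mu : ℝ}
    (hF : IsFriedrichsPair T0 T0t lam mu) :
    ∃ S : H →L[ℂ] H,
      (∀ φ : T0.domain, S (φ : H) = T0 φ + T0t ⟨(φ : H), hF.dom_eq.le φ.2⟩) ∧
      (∀ x y : H, ⟪S x, y⟫_ℂ = ⟪x, S y⟫_ℂ) ∧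
      (∀ x : H, 2 * mu * ‖x‖ ^ 2 ≤ (⟪x, S x⟫_ℂ).re) := by
  classical
  set g : T0.domain →ₗ[ℂ] H :=
    T0.toFun + T0t.toFun.comp (Submodule.inclusion hF.dom_eq.le) with hgdef
  have hg : ∀ φ : T0.domain, g φ = T0 φ + T0t ⟨(φ : H), hF.dom_eq.le φ.2⟩ := fun φ => rfl
  have hgb : ∀ φ : T0.domain, ‖g φ‖ ≤ 2 * lam * ‖(φ : H)‖ := by
    intro φ
    rw [hg]
    exact hF.bound (φ : H) φ.2
  set gc : T0.domain →L[ℂ] H := g.mkContinuous (2 * lam) hgb with hgcdef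
  set S : H →L[ℂ] H := gc.extend (Submodule.subtypeL T0.domain)
    with hSdef
  have hS1 : ∀ φ : T0.domain, S (φ : H) = T0 φ + T0t ⟨(φ : H), hF.dom_eq.le φ.2⟩ := by
    intro φ
    have h := ContinuousLinearMap.extend_eq gc (e := Submodule.subtypeL T0.domain)
      hF.dense'.denseRange_val isUniformEmbedding_subtype_val.isUniformInducing φ
    exact h.trans (hg φ)
  have hsymD : ∀ φ ψ : T0.domain, ⟪S (φ : H), (ψ : H)⟫_ℂ = ⟪(φ : H), S (ψ : H)⟫_ℂ := by
    intro φ ψ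
    rw [hS1 φ, hS1 ψ, inner_add_left, inner_add_right]
    have h1 : ⟪(T0 φ : H), (ψ : H)⟫_ℂ = ⟪(φ : H), (T0t ⟨(ψ : H), hF.dom_eq.le ψ.2⟩ : H)⟫_ℂ := by
      calc ⟪(T0 φ : H), (ψ : H)⟫_ℂ
          = starRingEnd ℂ ⟪(ψ : H), (T0 φ : H)⟫_ℂ := (inner_conj_symm _ _).symm
        _ = starRingEnd ℂ ⟪(T0t ⟨(ψ : H), hF.dom_eq.le ψ.2⟩ : H), (φ : H)⟫_ℂ :=
            congrArg _ (hF.sym φ ⟨(ψ : H), hF.dom_eq.le ψ.2⟩)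
        _ = ⟪(φ : H), (T0t ⟨(ψ : H), hF.dom_eq.le ψ.2⟩ : H)⟫_ℂ := inner_conj_symm _ _
    have h2 : ⟪(T0t ⟨(φ : H), hF.dom_eq.le φ.2⟩ : H), (ψ : H)⟫_ℂ = ⟪(φ : H), (T0 ψ : H)⟫_ℂ :=
      (show ⟪(φ : H), (T0 ψ : H)⟫_ℂ = ⟪(T0t ⟨(φ : H), hF.dom_eq.le φ.2⟩ : H), (ψ : H)⟫_ℂ from
        hF.sym ψ ⟨(φ : H), hF.dom_eq.le φ.2⟩).symm
    rw [h1, h2]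
    ring
  have hsym1 : ∀ (x : H) (ψ : T0.domain), ⟪S x, (ψ : H)⟫_ℂ = ⟪x, S (ψ : H)⟫_ℂ := by
    intro x ψ
    have hcont1 : Continuous fun z : H => ⟪S z, (ψ : H)⟫_ℂ := S.continuous.inner continuous_const
    have hcont2 : Continuous fun z : H => ⟪z, S (ψ : H)⟫_ℂ := continuous_id.inner continuous_const
    exact congrFun (Continuous.ext_on hF.dense' hcont1 hcont2
      (fun z hz => hsymD ⟨z, hz⟩ ψ)) x
  have hsym : ∀ x y : H, ⟪S x, y⟫_ℂ = ⟪x, S y⟫_ℂ := by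
    intro x y
    have hcont1 : Continuous fun z : H => ⟪S x, z⟫_ℂ := continuous_const.inner continuous_id
    have hcont2 : Continuous fun z : H => ⟪x, S z⟫_ℂ := continuous_const.inner S.continuous
    exact congrFun (Continuous.ext_on hF.dense' hcont1 hcont2
      (fun z hz => hsym1 x ⟨z, hz⟩)) y
  have hco : ∀ x : H, 2 * mu * ‖x‖ ^ 2 ≤ (⟪x, S x⟫_ℂ).re := by
    have hclosed : IsClosed {x : H | 2 * mu * ‖x‖ ^ 2 ≤ (⟪x, S x⟫_ℂ).re} := by
      apply isClosed_le
      · exact continuous_const.mul (continuous_norm.pow 2)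
      · exact Complex.continuous_re.comp (continuous_id.inner S.continuous)
    have hsub : (T0.domain : Set H) ⊆ {x : H | 2 * mu * ‖x‖ ^ 2 ≤ (⟪x, S x⟫_ℂ).re} := by
      rintro z hz
      have h := hF.coercive z hz
      have h2 : S z = T0 ⟨z, hz⟩ + T0t ⟨z, hF.dom_eq.le hz⟩ := hS1 ⟨z, hz⟩
      simp only [Set.mem_setOf_eq, h2]
      exact h
    intro x
    exact hclosed.closure_subset_iff.mpr hsub (hF.dense' x)
  exact ⟨S, hS1, hsym, hco⟩

/-- Theorem 2.3 (xii): if `V` is graph-norm closed, `W₀ ⊆ V ⊆ W⁺` and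
`V^[⊥] ⊆ W⁻`, then `T₁|_V : V → H` and `T̃₁|_{V^[⊥]} : V^[⊥] → H` are bijective,
and the a priori estimate `‖u‖ + ‖T₁u‖ ≤ (1 + 1/μ)‖T₁u‖` holds on `V`
(and likewise for `T̃₁` on `V^[⊥]`). -/
theorem bijective_realisation_with_signed_boundary_map
    (T0 T0t : H →ₗ.[ℂ] H) (lam mu : ℝ) (hF : IsFriedrichsPair T0 T0t lam mu)
    (hW : T0t.adjoint.domain = T0.adjoint.domain)
    (V : Submodule ℂ ↥T0t.adjoint.domain)
    (hclosed : GClosed T0t (V : Set _))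
    (hW0V : W0set T0 T0t ⊆ (V : Set _))
    (hpos : (V : Set _) ⊆ Wplus T0 T0t hW)
    (hneg : iorth T0 T0t hW (V : Set _) ⊆ Wminus T0 T0t hW) :
    (∀ u ∈ V, ∀ v ∈ V, T0t.adjoint u = T0t.adjoint v → u = v) ∧
    (∀ f : H, ∃ u ∈ V, T0t.adjoint u = f) ∧
    (∀ u ∈ iorth T0 T0t hW (V : Set _), ∀ v ∈ iorth T0 T0t hW (V : Set _),
      T0.adjoint ⟨(u : H), hW.le u.2⟩ = T0.adjoint ⟨(v : H), hW.le v.2⟩ → u = v) ∧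
    (∀ f : H, ∃ u ∈ iorth T0 T0t hW (V : Set _),
      T0.adjoint ⟨(u : H), hW.le u.2⟩ = f) ∧
    (∀ u ∈ V, ‖(u : H)‖ + ‖T0t.adjoint u‖ ≤ (1 + 1 / mu) * ‖T0t.adjoint u‖) ∧
    (∀ u ∈ iorth T0 T0t hW (V : Set _),
      ‖(u : H)‖ + ‖T0.adjoint ⟨(u : H), hW.le u.2⟩‖ ≤
        (1 + 1 / mu) * ‖T0.adjoint ⟨(u : H), hW.le u.2⟩‖) := by
  classical
  obtain ⟨S, hS1, hSsym, hSco⟩ := friedrichs_exists_S T0 T0t hF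
  have hD : Dense (T0.domain : Set H) := hF.dense'
  have hDt : Dense (T0t.domain : Set H) := hF.dom_eq ▸ hF.dense'
  have hmu := hF.mu_pos
  have fat : ∀ (x : T0t.adjoint.domain) (y : T0t.domain),
      ⟪T0t.adjoint x, (y : H)⟫_ℂ = ⟪(x : H), T0t y⟫_ℂ :=
    LinearPMap.adjoint_isFormalAdjoint hDt
  have fa0 : ∀ (x : T0.adjoint.domain) (y : T0.domain),
      ⟪T0.adjoint x, (y : H)⟫_ℂ = ⟪(x : H), T0 y⟫_ℂ :=
    LinearPMap.adjoint_isFormalAdjoint hD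
  -- `T₁ + T̃₁ = S` on the graph space
  have hsum : ∀ u : T0t.adjoint.domain,
      T0t.adjoint u + T0.adjoint ⟨(u : H), hW.le u.2⟩ = S (u : H) := by
    intro u
    apply hD.eq_of_inner_left (𝕜 := ℂ)
    intro x hx; let φ : T0.domain := ⟨x, hx⟩
    calc ⟪T0t.adjoint u + T0.adjoint ⟨(u : H), hW.le u.2⟩, (φ : H)⟫_ℂ
        = ⟪T0t.adjoint u, (φ : H)⟫_ℂ + ⟪T0.adjoint ⟨(u : H), hW.le u.2⟩, (φ : H)⟫_ℂ :=
          inner_add_left _ _ _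
      _ = ⟪(u : H), (T0t ⟨(φ : H), hF.dom_eq.le φ.2⟩ : H)⟫_ℂ + ⟪(u : H), (T0 φ : H)⟫_ℂ := by
          congr 1
          · exact fat u ⟨(φ : H), hF.dom_eq.le φ.2⟩
          · exact fa0 ⟨(u : H), hW.le u.2⟩ φ
      _ = ⟪(u : H), (T0 φ + T0t ⟨(φ : H), hF.dom_eq.le φ.2⟩ : H)⟫_ℂ := by
          rw [inner_add_right]; ring
      _ = ⟪(u : H), S (φ : H)⟫_ℂ := by rw [hS1 φ]
      _ = ⟪S (u : H), (φ : H)⟫_ℂ := (hSsym _ _).symm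
  -- the test space embeds into the graph space
  have hDmemW : ∀ φ : T0.domain, (φ : H) ∈ T0t.adjoint.domain := by
    intro φ
    apply LinearPMap.mem_adjoint_domain_of_exists
    refine ⟨T0 φ, fun ψ => ?_⟩
    calc ⟪(T0 φ : H), (ψ : H)⟫_ℂ
        = starRingEnd ℂ ⟪(ψ : H), (T0 φ : H)⟫_ℂ := (inner_conj_symm _ _).symm
      _ = starRingEnd ℂ ⟪(T0t ψ : H), (φ : H)⟫_ℂ := congrArg _ (hF.sym φ ψ)
      _ = ⟪(φ : H), (T0t ψ : H)⟫_ℂ := inner_conj_symm _ _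
  have hT1D : ∀ φ : T0.domain, T0t.adjoint ⟨(φ : H), hDmemW φ⟩ = T0 φ := by
    intro φ
    apply LinearPMap.adjoint_apply_eq hDt
    intro ψ
    calc ⟪(T0 φ : H), (ψ : H)⟫_ℂ
        = starRingEnd ℂ ⟪(ψ : H), (T0 φ : H)⟫_ℂ := (inner_conj_symm _ _).symm
      _ = starRingEnd ℂ ⟪(T0t ψ : H), (φ : H)⟫_ℂ := congrArg _ (hF.sym φ ψ)
      _ = ⟪(φ : H), (T0t ψ : H)⟫_ℂ := inner_conj_symm _ _
  have hembV : ∀ φ : T0.domain, (⟨(φ : H), hDmemW φ⟩ : T0t.adjoint.domain) ∈ V := by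
    intro φ
    apply hW0V
    exact T0.le_closure.1 φ.2
  -- the boundary form written with mathlib's inner product
  have hbform : ∀ u v : T0t.adjoint.domain, bform T0 T0t hW u v
      = ⟪(v : H), T0t.adjoint u⟫_ℂ - ⟪T0.adjoint ⟨(v : H), hW.le v.2⟩, (u : H)⟫_ℂ :=
    fun u v => rfl
  have key : ∀ u v : T0t.adjoint.domain,
      ⟪(v : H), T0t.adjoint u⟫_ℂ + ⟪(v : H), T0.adjoint ⟨(u : H), hW.le u.2⟩⟫_ℂ
        = ⟪T0t.adjoint v, (u : H)⟫_ℂ + ⟪T0.adjoint ⟨(v : H), hW.le v.2⟩, (u : H)⟫_ℂ := by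
    intro u v
    rw [← inner_add_right, ← inner_add_left, hsum u, hsum v, hSsym]
  have hbsymm : ∀ u v : T0t.adjoint.domain,
      bform T0 T0t hW u v = starRingEnd ℂ (bform T0 T0t hW v u) := by
    intro u v
    rw [hbform, hbform, _root_.map_sub, inner_conj_symm, inner_conj_symm]
    linear_combination key u v
  have hbre : ∀ u : T0t.adjoint.domain, (bform T0 T0t hW u u).re
      = (⟪(u : H), T0t.adjoint u⟫_ℂ).re
        - (⟪(u : H), T0.adjoint ⟨(u : H), hW.le u.2⟩⟫_ℂ).re := by
    intro u
    rw [hbform, Complex.sub_re,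
      ← inner_conj_symm (T0.adjoint ⟨(u : H), hW.le u.2⟩) ((u : H)), Complex.conj_re]
  have hre1 : ∀ u : T0t.adjoint.domain,
      2 * mu * ‖(u : H)‖ ^ 2 + (bform T0 T0t hW u u).re
        ≤ 2 * (⟪(u : H), T0t.adjoint u⟫_ℂ).re := by
    intro u
    have h1 := hSco (u : H)
    have h2 : (⟪(u : H), T0t.adjoint u⟫_ℂ).re
        + (⟪(u : H), T0.adjoint ⟨(u : H), hW.le u.2⟩⟫_ℂ).re
        = (⟪(u : H), S (u : H)⟫_ℂ).re := by
      rw [← Complex.add_re, ← inner_add_right, hsum u]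
    have h3 := hbre u
    linarith
  have hre2 : ∀ u : T0t.adjoint.domain,
      2 * mu * ‖(u : H)‖ ^ 2 - (bform T0 T0t hW u u).re
        ≤ 2 * (⟪(u : H), T0.adjoint ⟨(u : H), hW.le u.2⟩⟫_ℂ).re := by
    intro u
    have h1 := hSco (u : H)
    have h2 : (⟪(u : H), T0t.adjoint u⟫_ℂ).re
        + (⟪(u : H), T0.adjoint ⟨(u : H), hW.le u.2⟩⟫_ℂ).re
        = (⟪(u : H), S (u : H)⟫_ℂ).re := by
      rw [← Complex.add_re, ← inner_add_right, hsum u]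
    have h3 := hbre u
    linarith
  have est1 : ∀ u : T0t.adjoint.domain, 0 ≤ (bform T0 T0t hW u u).re →
      mu * ‖(u : H)‖ ≤ ‖T0t.adjoint u‖ := by
    intro u hu
    have h := hre1 u
    have habs : (⟪(u : H), T0t.adjoint u⟫_ℂ).re ≤ ‖(u : H)‖ * ‖T0t.adjoint u‖ :=
      le_trans (Complex.re_le_norm _)
        (by exact norm_inner_le_norm _ _)
    rw [pow_two] at h
    rcases (norm_nonneg ((u : H))).eq_or_lt with h0 | h0
    · rw [← h0, mul_zero]; exact norm_nonneg _
    · nlinarith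
  have est2 : ∀ u : T0t.adjoint.domain, (bform T0 T0t hW u u).re ≤ 0 →
      mu * ‖(u : H)‖ ≤ ‖T0.adjoint ⟨(u : H), hW.le u.2⟩‖ := by
    intro u hu
    have h := hre2 u
    have habs : (⟪(u : H), T0.adjoint ⟨(u : H), hW.le u.2⟩⟫_ℂ).re
        ≤ ‖(u : H)‖ * ‖T0.adjoint ⟨(u : H), hW.le u.2⟩‖ :=
      le_trans (Complex.re_le_norm _)
        (by exact norm_inner_le_norm _ _)
    rw [pow_two] at h
    rcases (norm_nonneg ((u : H))).eq_or_lt with h0 | h0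
    · rw [← h0, mul_zero]; exact norm_nonneg _
    · nlinarith
  -- closedness of the adjoints
  have hgrapht : ∀ x y : H, (∀ ψ : T0t.domain, ⟪y, (ψ : H)⟫_ℂ = ⟪x, (T0t ψ : H)⟫_ℂ) →
      ∃ hx : x ∈ T0t.adjoint.domain, T0t.adjoint ⟨x, hx⟩ = y := by
    intro x y h
    have hx : x ∈ T0t.adjoint.domain := LinearPMap.mem_adjoint_domain_of_exists _ ⟨y, h⟩
    exact ⟨hx, LinearPMap.adjoint_apply_eq hDt ⟨x, hx⟩ h⟩
  have hgraph0 : ∀ x y : H, (∀ ψ : T0.domain, ⟪y, (ψ : H)⟫_ℂ = ⟪x, (T0 ψ : H)⟫_ℂ) →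
      ∃ hx : x ∈ T0.adjoint.domain, T0.adjoint ⟨x, hx⟩ = y := by
    intro x y h
    have hx : x ∈ T0.adjoint.domain := LinearPMap.mem_adjoint_domain_of_exists _ ⟨y, h⟩
    exact ⟨hx, LinearPMap.adjoint_apply_eq hD ⟨x, hx⟩ h⟩
  -- linearity helpers
  have hT1sub : ∀ u v : T0t.adjoint.domain,
      T0t.adjoint (u - v) = T0t.adjoint u - T0t.adjoint v :=
    fun u v => LinearMap.map_sub T0t.adjoint.toFun u v
  have hT1add : ∀ u v : T0t.adjoint.domain,
      T0t.adjoint (u + v) = T0t.adjoint u + T0t.adjoint v :=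
    fun u v => LinearMap.map_add T0t.adjoint.toFun u v
  have hT1smul : ∀ (c : ℂ) (u : T0t.adjoint.domain),
      T0t.adjoint (c • u) = c • T0t.adjoint u :=
    fun c u => LinearMap.map_smul T0t.adjoint.toFun c u
  have hT1tsub : ∀ u v : T0t.adjoint.domain,
      T0.adjoint ⟨((u - v : T0t.adjoint.domain) : H), hW.le (u - v).2⟩
        = T0.adjoint ⟨(u : H), hW.le u.2⟩ - T0.adjoint ⟨(v : H), hW.le v.2⟩ := by
    intro u v
    have h1 : (⟨((u - v : T0t.adjoint.domain) : H), hW.le (u - v).2⟩ : T0.adjoint.domain)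
        = (⟨(u : H), hW.le u.2⟩ : T0.adjoint.domain) - ⟨(v : H), hW.le v.2⟩ := by
      apply Subtype.ext; simp
    rw [h1]
    exact LinearMap.map_sub T0.adjoint.toFun _ _
  -- injectivity on V
  have injV : ∀ u ∈ V, ∀ v ∈ V, T0t.adjoint u = T0t.adjoint v → u = v := by
    intro u hu v hv heq
    have hmem : u - v ∈ V := V.sub_mem hu hv
    have h0 : T0t.adjoint (u - v) = 0 := by rw [hT1sub, heq, sub_self]
    have h := est1 (u - v) (hpos hmem)
    rw [h0, norm_zero] at h
    have hz : ‖((u - v : T0t.adjoint.domain) : H)‖ = 0 :=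
      le_antisymm (by nlinarith [norm_nonneg ((u - v : T0t.adjoint.domain) : H)])
        (norm_nonneg _)
    have h2 : (u : H) - (v : H) = 0 := by
      have := norm_eq_zero.mp hz
      simpa using this
    exact Subtype.ext (sub_eq_zero.mp h2)
  -- a priori estimate on V
  have estV : ∀ u ∈ V, ‖(u : H)‖ + ‖T0t.adjoint u‖ ≤ (1 + 1 / mu) * ‖T0t.adjoint u‖ := by
    intro u hu
    have h := est1 u (hpos hu)
    have h2 : ‖(u : H)‖ ≤ ‖T0t.adjoint u‖ / mu := by
      rw [le_div_iff₀ hmu, mul_comm]; exact h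
    calc ‖(u : H)‖ + ‖T0t.adjoint u‖ ≤ ‖T0t.adjoint u‖ / mu + ‖T0t.adjoint u‖ := by linarith
      _ = (1 + 1 / mu) * ‖T0t.adjoint u‖ := by field_simp; ring
  have estIo : ∀ u ∈ iorth T0 T0t hW (V : Set _),
      ‖(u : H)‖ + ‖T0.adjoint ⟨(u : H), hW.le u.2⟩‖
        ≤ (1 + 1 / mu) * ‖T0.adjoint ⟨(u : H), hW.le u.2⟩‖ := by
    intro u hu
    have h := est2 u (hneg hu)
    have h2 : ‖(u : H)‖ ≤ ‖T0.adjoint ⟨(u : H), hW.le u.2⟩‖ / mu := by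
      rw [le_div_iff₀ hmu, mul_comm]; exact h
    calc ‖(u : H)‖ + ‖T0.adjoint ⟨(u : H), hW.le u.2⟩‖
        ≤ ‖T0.adjoint ⟨(u : H), hW.le u.2⟩‖ / mu + ‖T0.adjoint ⟨(u : H), hW.le u.2⟩‖ := by
          linarith
      _ = (1 + 1 / mu) * ‖T0.adjoint ⟨(u : H), hW.le u.2⟩‖ := by field_simp; ring
  -- surjectivity of T₁ on V
  have surjV : ∀ f : H, ∃ u ∈ V, T0t.adjoint u = f := by
    intro f
    set R : Submodule ℂ H := V.map T0t.adjoint.toFun with hRdef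
    have hclosedR : IsClosed (R : Set H) := by
      apply IsSeqClosed.isClosed
      intro g f' hg hgf
      choose u huV hTu0 using fun n => Submodule.mem_map.mp (hg n)
      have hTu : ∀ n, T0t.adjoint (u n) = g n := hTu0
      have hCg : CauchySeq g := hgf.cauchySeq
      have hCu : CauchySeq fun n => ((u n : T0t.adjoint.domain) : H) := by
        rw [Metric.cauchySeq_iff] at hCg ⊢
        intro ε hε
        obtain ⟨N, hN⟩ := hCg (mu * ε) (by positivity)
        refine ⟨N, fun m hm n hn => ?_⟩
        have hsubV : u m - u n ∈ V := V.sub_mem (huV m) (huV n)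
        have h := est1 (u m - u n) (hpos hsubV)
        have hTsub : T0t.adjoint (u m - u n) = g m - g n := by
          rw [hT1sub, hTu, hTu]
        rw [hTsub] at h
        have h2 : mu * ‖(u m : H) - (u n : H)‖ ≤ ‖g m - g n‖ := by simpa using h
        have hd := hN m hm n hn
        rw [dist_eq_norm] at hd
        rw [dist_eq_norm]
        nlinarith
      obtain ⟨x, hx⟩ := cauchySeq_tendsto_of_complete hCu
      have hinner : ∀ ψ : T0t.domain, ⟪f', (ψ : H)⟫_ℂ = ⟪x, (T0t ψ : H)⟫_ℂ := by
        intro ψ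
        have t1 : Tendsto (fun n => ⟪g n, (ψ : H)⟫_ℂ) atTop (𝓝 ⟪f', (ψ : H)⟫_ℂ) :=
          hgf.inner tendsto_const_nhds
        have t2 : Tendsto (fun n => ⟪g n, (ψ : H)⟫_ℂ) atTop (𝓝 ⟪x, (T0t ψ : H)⟫_ℂ) := by
          have heqfun : (fun n => ⟪g n, (ψ : H)⟫_ℂ)
              = fun n => ⟪((u n : T0t.adjoint.domain) : H), (T0t ψ : H)⟫_ℂ := by
            funext n
            rw [← hTu n]
            exact fat (u n) ψ
          rw [heqfun]
          exact hx.inner tendsto_const_nhds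
        exact tendsto_nhds_unique t1 t2
      obtain ⟨hxmem, hxval⟩ := hgrapht x f' hinner
      refine Submodule.mem_map.mpr ⟨⟨x, hxmem⟩, ?_, hxval⟩
      apply hclosed u huV
      have hn1 : Tendsto (fun n => ‖((u n : T0t.adjoint.domain) : H) - x‖) atTop (𝓝 0) :=
        tendsto_iff_norm_sub_tendsto_zero.mp hx
      have hn2 : Tendsto (fun n => ‖g n - f'‖) atTop (𝓝 0) :=
        tendsto_iff_norm_sub_tendsto_zero.mp hgf
      have hfun : (fun n => gdist T0t (u n) ⟨x, hxmem⟩)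
          = fun n => ‖((u n : T0t.adjoint.domain) : H) - x‖ + ‖g n - f'‖ := by
        funext n
        simp only [gdist, gnorm]
        have hTn : T0t.adjoint (u n - ⟨x, hxmem⟩) = g n - f' := by
          rw [hT1sub, hTu n, hxval]
        have hcoe : ((u n - ⟨x, hxmem⟩ : T0t.adjoint.domain) : H)
            = ((u n : T0t.adjoint.domain) : H) - x := by simp
        rw [hcoe, hTn]
      rw [hfun]
      simpa using hn1.add hn2
    haveI : CompleteSpace R := hclosedR.completeSpace_coe
    have hbot : Rᗮ = ⊥ := by
      rw [Submodule.eq_bot_iff]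
      intro w hw
      have hv' : ∀ u : T0t.adjoint.domain, u ∈ V → ⟪T0t.adjoint u, w⟫_ℂ = 0 := by
        intro u hu
        exact (Submodule.mem_orthogonal R w).mp hw _ (Submodule.mem_map.mpr ⟨u, hu, rfl⟩)
      have hφ : ∀ ψ : T0.domain, ⟪(0 : H), (ψ : H)⟫_ℂ = ⟪w, (T0 ψ : H)⟫_ℂ := by
        intro ψ
        have h1 := hv' ⟨(ψ : H), hDmemW ψ⟩ (hembV ψ)
        rw [hT1D ψ] at h1
        rw [inner_zero_left]
        calc (0 : ℂ) = starRingEnd ℂ ⟪(T0 ψ : H), w⟫_ℂ := by rw [h1]; simp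
          _ = ⟪w, (T0 ψ : H)⟫_ℂ := inner_conj_symm _ _
      obtain ⟨hwmem, hwval⟩ := hgraph0 w 0 hφ
      have hwW : w ∈ T0t.adjoint.domain := by rw [hW]; exact hwmem
      have hwval' : T0.adjoint ⟨((⟨w, hwW⟩ : T0t.adjoint.domain) : H),
          hW.le (⟨w, hwW⟩ : T0t.adjoint.domain).2⟩ = 0 := hwval
      have hio : (⟨w, hwW⟩ : T0t.adjoint.domain) ∈ iorth T0 T0t hW (V : Set _) := by
        intro z hz
        rw [hbsymm]
        have hz0 : bform T0 T0t hW z (⟨w, hwW⟩ : T0t.adjoint.domain) = 0 := by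
          rw [hbform]
          have e1 : ⟪((⟨w, hwW⟩ : T0t.adjoint.domain) : H), T0t.adjoint z⟫_ℂ = 0 := by
            have : ⟪((⟨w, hwW⟩ : T0t.adjoint.domain) : H), T0t.adjoint z⟫_ℂ
                = starRingEnd ℂ ⟪T0t.adjoint z, w⟫_ℂ := (inner_conj_symm _ _).symm
            rw [this, hv' z hz, _root_.map_zero]
          rw [e1, hwval', inner_zero_left, sub_zero]
        rw [hz0, _root_.map_zero]
      have h := est2 _ (hneg hio)
      rw [hwval', norm_zero] at h
      have : ‖w‖ = 0 := le_antisymm (by nlinarith [norm_nonneg w]) (norm_nonneg w)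
      exact norm_eq_zero.mp this
    have htop : R = ⊤ := Submodule.orthogonal_eq_bot_iff.mp hbot
    have hfR : f ∈ R := htop.symm ▸ Submodule.mem_top
    obtain ⟨u, hu, hval⟩ := Submodule.mem_map.mp hfR
    exact ⟨u, hu, hval⟩
  -- injectivity on V^[⊥]
  have injIo : ∀ u ∈ iorth T0 T0t hW (V : Set _), ∀ v ∈ iorth T0 T0t hW (V : Set _),
      T0.adjoint ⟨(u : H), hW.le u.2⟩ = T0.adjoint ⟨(v : H), hW.le v.2⟩ → u = v := by
    intro u hu v hv heq
    have hsubio : (u - v) ∈ iorth T0 T0t hW (V : Set _) := by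
      intro z hz
      have hbsub : bform T0 T0t hW (u - v) z
          = bform T0 T0t hW u z - bform T0 T0t hW v z := by
        rw [hbform, hbform, hbform, hT1sub]
        have hcoe : ((u - v : T0t.adjoint.domain) : H) = (u : H) - (v : H) := by simp
        rw [hcoe, inner_sub_right, inner_sub_right]
        ring
      rw [hbsub, hu z hz, hv z hz, sub_zero]
    have h0 : T0.adjoint ⟨((u - v : T0t.adjoint.domain) : H), hW.le (u - v).2⟩ = 0 := by
      rw [hT1tsub, heq, sub_self]
    have h := est2 (u - v) (hneg hsubio)
    rw [h0, norm_zero] at h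
    have hz : ‖((u - v : T0t.adjoint.domain) : H)‖ = 0 :=
      le_antisymm (by nlinarith [norm_nonneg ((u - v : T0t.adjoint.domain) : H)])
        (norm_nonneg _)
    have h2 : (u : H) - (v : H) = 0 := by
      have := norm_eq_zero.mp hz
      simpa using this
    exact Subtype.ext (sub_eq_zero.mp h2)
  -- surjectivity of T̃₁ on V^[⊥]
  have surjIo : ∀ f : H, ∃ u ∈ iorth T0 T0t hW (V : Set _),
      T0.adjoint ⟨(u : H), hW.le u.2⟩ = f := by
    intro f
    choose K hKV hK using surjV
    have hKadd : ∀ a b : H, K (a + b) = K a + K b := by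
      intro a b
      apply injV _ (hKV _) _ (V.add_mem (hKV a) (hKV b))
      rw [hK, hT1add, hK, hK]
    have hKsmul : ∀ (c : ℂ) (a : H), K (c • a) = c • K a := by
      intro c a
      apply injV _ (hKV _) _ (V.smul_mem c (hKV a))
      rw [hK, hT1smul, hK]
    have hKnorm : ∀ a : H, mu * ‖(K a : H)‖ ≤ ‖a‖ := by
      intro a
      have h := est1 (K a) (hpos (hKV a))
      rwa [hK] at h
    let L0 : H →ₗ[ℂ] ℂ :=
      { toFun := fun g => ⟪f, ((K g : T0t.adjoint.domain) : H)⟫_ℂ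
        map_add' := by
          intro a b
          rw [hKadd]
          simp [inner_add_right]
        map_smul' := by
          intro c a
          rw [hKsmul]
          simp [inner_smul_right] }
    have hL0b : ∀ g : H, ‖L0 g‖ ≤ (‖f‖ * mu⁻¹) * ‖g‖ := by
      intro g
      have h1 : ‖⟪f, ((K g : T0t.adjoint.domain) : H)⟫_ℂ‖
          ≤ ‖f‖ * ‖((K g : T0t.adjoint.domain) : H)‖ := norm_inner_le_norm _ _
      have h2 := hKnorm g
      have h3 : ‖((K g : T0t.adjoint.domain) : H)‖ ≤ mu⁻¹ * ‖g‖ := by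
        rw [inv_mul_eq_div, le_div_iff₀ hmu, mul_comm]
        exact h2
      calc ‖L0 g‖ = ‖⟪f, ((K g : T0t.adjoint.domain) : H)⟫_ℂ‖ := rfl
        _ ≤ ‖f‖ * ‖((K g : T0t.adjoint.domain) : H)‖ := h1
        _ ≤ ‖f‖ * (mu⁻¹ * ‖g‖) := mul_le_mul_of_nonneg_left h3 (norm_nonneg f)
        _ = (‖f‖ * mu⁻¹) * ‖g‖ := by ring
    let L : H →L[ℂ] ℂ := L0.mkContinuous (‖f‖ * mu⁻¹) hL0b
    set v : H := (InnerProductSpace.toDual ℂ H).symm L with hvdef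
    have hv : ∀ g : H, ⟪v, g⟫_ℂ = ⟪f, ((K g : T0t.adjoint.domain) : H)⟫_ℂ := by
      intro g
      rw [hvdef, InnerProductSpace.toDual_symm_apply]
      rfl
    have hvu : ∀ u : T0t.adjoint.domain, u ∈ V →
        ⟪v, T0t.adjoint u⟫_ℂ = ⟪f, (u : H)⟫_ℂ := by
      intro u hu
      have hKu : K (T0t.adjoint u) = u := injV _ (hKV _) u hu (by rw [hK])
      rw [hv, hKu]
    have hφ : ∀ ψ : T0.domain, ⟪f, (ψ : H)⟫_ℂ = ⟪v, (T0 ψ : H)⟫_ℂ := by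
      intro ψ
      have h1 := hvu ⟨(ψ : H), hDmemW ψ⟩ (hembV ψ)
      rw [hT1D ψ] at h1
      exact h1.symm
    obtain ⟨hvmem, hvval⟩ := hgraph0 v f hφ
    have hvW : v ∈ T0t.adjoint.domain := by rw [hW]; exact hvmem
    have hvval' : T0.adjoint ⟨((⟨v, hvW⟩ : T0t.adjoint.domain) : H),
        hW.le (⟨v, hvW⟩ : T0t.adjoint.domain).2⟩ = f := hvval
    refine ⟨⟨v, hvW⟩, ?_, hvval'⟩
    intro z hz
    rw [hbsymm]
    have hz0 : bform T0 T0t hW z (⟨v, hvW⟩ : T0t.adjoint.domain) = 0 := by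
      rw [hbform]
      have e1 : ⟪((⟨v, hvW⟩ : T0t.adjoint.domain) : H), T0t.adjoint z⟫_ℂ
          = ⟪f, (z : H)⟫_ℂ := hvu z hz
      rw [e1, hvval', sub_self]
    rw [hz0, _root_.map_zero]
  exact ⟨injV, surjV, injIo, surjIo, estV, estIo⟩
end
end
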